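/- arXiv:1612.03586 — 4 statements merged into one kernel-verified Lean document; each statement's English description precedes it below -/
import Mathlib

section
/- Let 0 < h < 2π/3 and let T_i be the trigonometric cubic B-spline on the uniform knots x_j = x_0 + j·h. Then T_i is differentiable at the knots x_{i-1}, x_i, x_{i+1}, and its derivative there takes the values T_i′(x_{i-1}) = (3/4)/sin(3h/2), T_i′(x_i) = 0, and T_i′(x_{i+1}) = −(3/4)/sin(3h/2). -/
open Real

/-- The uniform knots `x_j = x₀ + j·h`. -/
noncomputable def knot (h x₀ : ℝ) (j : ℤ) : ℝ := x₀ + (j : ℝ) * h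

/-- The trigonometric cubic B-spline `T_i` on the uniform knots `x_j = x₀ + j·h`,
defined piecewise via `w_c(x) = sin((x-c)/2)`, `y_c(x) = sin((c-x)/2)` and
`γ = sin(h/2)·sin(h)·sin(3h/2)`. -/
noncomputable def trigBSpline (h x₀ : ℝ) (i : ℤ) (x : ℝ) : ℝ :=
  let X : ℤ → ℝ := knot h x₀
  let w : ℝ → ℝ := fun c => Real.sin ((x - c) / 2)
  let y : ℝ → ℝ := fun c => Real.sin ((c - x) / 2)
  let γ : ℝ := Real.sin (h / 2) * Real.sin h * Real.sin (3 * h / 2)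
  if x ∈ Set.Icc (X (i - 2)) (X (i - 1)) then
    (1 / γ) * (w (X (i - 2))) ^ 3
  else if x ∈ Set.Icc (X (i - 1)) (X i) then
    (1 / γ) * (w (X (i - 2)) * (w (X (i - 2)) * y (X i) + y (X (i + 1)) * w (X (i - 1)))
      + y (X (i + 2)) * (w (X (i - 1))) ^ 2)
  else if x ∈ Set.Icc (X i) (X (i + 1)) then
    (1 / γ) * (w (X (i - 2)) * (y (X (i + 1))) ^ 2
      + y (X (i + 2)) * (w (X (i - 1)) * y (X (i + 1)) + y (X (i + 2)) * w (X i)))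
  else if x ∈ Set.Icc (X (i + 1)) (X (i + 2)) then
    (1 / γ) * (y (X (i + 2))) ^ 3
  else 0

/-- The same spline with the five relevant knots written as `a, a+h, …, a+4h`. -/
noncomputable def trigBSplineAux (h a : ℝ) (x : ℝ) : ℝ :=
  let w : ℝ → ℝ := fun c => Real.sin ((x - c) / 2)
  let y : ℝ → ℝ := fun c => Real.sin ((c - x) / 2)
  let γ : ℝ := Real.sin (h / 2) * Real.sin h * Real.sin (3 * h / 2)
  if x ∈ Set.Icc a (a + h) then
    (1 / γ) * (w a) ^ 3
  else if x ∈ Set.Icc (a + h) (a + 2*h) then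
    (1 / γ) * (w a * (w a * y (a + 2*h) + y (a + 3*h) * w (a + h))
      + y (a + 4*h) * (w (a + h)) ^ 2)
  else if x ∈ Set.Icc (a + 2*h) (a + 3*h) then
    (1 / γ) * (w a * (y (a + 3*h)) ^ 2
      + y (a + 4*h) * (w (a + h) * y (a + 3*h) + y (a + 4*h) * w (a + 2*h)))
  else if x ∈ Set.Icc (a + 3*h) (a + 4*h) then
    (1 / γ) * (y (a + 4*h)) ^ 3
  else 0

lemma hasDerivAt_w (c x : ℝ) :
    HasDerivAt (fun t => Real.sin ((t - c)/2)) (Real.cos ((x - c)/2) * (1/2)) x := by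
  have h1 : HasDerivAt (fun t : ℝ => (t - c)/2) (1/2) x := by
    simpa using ((hasDerivAt_id x).sub_const c).div_const 2
  simpa using h1.sin

lemma hasDerivAt_y (c x : ℝ) :
    HasDerivAt (fun t => Real.sin ((c - t)/2)) (Real.cos ((c - x)/2) * (-(1/2))) x := by
  have h1 : HasDerivAt (fun t : ℝ => (c - t)/2) (-(1/2)) x := by
    have := ((hasDerivAt_id x).const_sub c).div_const 2
    exact this.congr_deriv (by norm_num)
  simpa using h1.sin

theorem trigBSplineAux_deriv (h a : ℝ) (h0 : 0 < h) (h1 : h < 2 * Real.pi / 3) :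
    HasDerivAt (trigBSplineAux h a) ((3 / 4) / Real.sin (3 * h / 2)) (a + h) ∧
    HasDerivAt (trigBSplineAux h a) 0 (a + 2*h) ∧
    HasDerivAt (trigBSplineAux h a) (-((3 / 4) / Real.sin (3 * h / 2))) (a + 3*h) := by
  have hπ := Real.pi_pos
  have hs : 0 < Real.sin (h/2) := Real.sin_pos_of_pos_of_lt_pi (by linarith) (by linarith)
  have hc : 0 < Real.cos (h/2) := Real.cos_pos_of_mem_Ioo ⟨by linarith, by linarith⟩
  have hσ : 0 < Real.sin (3*h/2) := Real.sin_pos_of_pos_of_lt_pi (by linarith) (by linarith)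
  have hs' := hs.ne'
  have hc' := hc.ne'
  have hσ' := hσ.ne'
  have sh : Real.sin h = 2 * Real.sin (h/2) * Real.cos (h/2) := by
    have := Real.sin_two_mul (h/2)
    rw [show 2 * (h/2) = h by ring] at this
    rw [this]
  set γ : ℝ := Real.sin (h / 2) * Real.sin h * Real.sin (3 * h / 2) with hγdef
  -- the four smooth pieces
  set A : ℝ → ℝ := fun x => (1/γ) * (Real.sin ((x - a)/2)) ^ 3 with hA
  set B : ℝ → ℝ := fun x => (1/γ) * (Real.sin ((x - a)/2) * (Real.sin ((x - a)/2) *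
      Real.sin ((a + 2*h - x)/2) + Real.sin ((a + 3*h - x)/2) * Real.sin ((x - (a + h))/2))
      + Real.sin ((a + 4*h - x)/2) * (Real.sin ((x - (a + h))/2)) ^ 2) with hB
  set C : ℝ → ℝ := fun x => (1/γ) * (Real.sin ((x - a)/2) * (Real.sin ((a + 3*h - x)/2)) ^ 2
      + Real.sin ((a + 4*h - x)/2) * (Real.sin ((x - (a + h))/2) * Real.sin ((a + 3*h - x)/2)
      + Real.sin ((a + 4*h - x)/2) * Real.sin ((x - (a + 2*h))/2))) with hC
  set D : ℝ → ℝ := fun x => (1/γ) * (Real.sin ((a + 4*h - x)/2)) ^ 3 with hD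
  -- derivatives of the pieces at the knots
  have dA2 : HasDerivAt A ((3/4)/Real.sin (3*h/2)) (a+h) := by
    have hd := ((hasDerivAt_w a (a+h)).pow 3).const_mul (1/γ)
    refine hd.congr_deriv ?_
    rw [hγdef, sh, show (a + h - a)/2 = h/2 by ring]
    field_simp
    ring
  have dB2 : HasDerivAt B ((3/4)/Real.sin (3*h/2)) (a+h) := by
    have hd := (((hasDerivAt_w a (a+h)).mul (((hasDerivAt_w a (a+h)).mul
        (hasDerivAt_y (a+2*h) (a+h))).add ((hasDerivAt_y (a+3*h) (a+h)).mul
        (hasDerivAt_w (a+h) (a+h))))).add ((hasDerivAt_y (a+4*h) (a+h)).mul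
        ((hasDerivAt_w (a+h) (a+h)).pow 2))).const_mul (1/γ)
    refine hd.congr_deriv ?_
    simp only [Pi.pow_apply, Pi.mul_apply, Pi.add_apply]
    rw [hγdef, sh,
      show (a + h - a)/2 = h/2 by ring,
      show (a + 2*h - (a+h))/2 = h/2 by ring,
      show (a + 3*h - (a+h))/2 = h by ring,
      show (a + 4*h - (a+h))/2 = 3*h/2 by ring,
      show (a + h - (a+h))/2 = (0:ℝ) by ring,
      Real.sin_zero, Real.cos_zero, sh]
    field_simp
    ring
  have dB3 : HasDerivAt B 0 (a+2*h) := by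
    have hd := (((hasDerivAt_w a (a+2*h)).mul (((hasDerivAt_w a (a+2*h)).mul
        (hasDerivAt_y (a+2*h) (a+2*h))).add ((hasDerivAt_y (a+3*h) (a+2*h)).mul
        (hasDerivAt_w (a+h) (a+2*h))))).add ((hasDerivAt_y (a+4*h) (a+2*h)).mul
        ((hasDerivAt_w (a+h) (a+2*h)).pow 2))).const_mul (1/γ)
    refine hd.congr_deriv ?_
    simp only [Pi.pow_apply, Pi.mul_apply, Pi.add_apply]
    rw [hγdef,
      show (a + 2*h - a)/2 = h by ring,
      show (a + 2*h - (a+h))/2 = h/2 by ring,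
      show (a + 3*h - (a+2*h))/2 = h/2 by ring,
      show (a + 4*h - (a+2*h))/2 = h by ring,
      show (a + 2*h - (a+2*h))/2 = (0:ℝ) by ring,
      Real.sin_zero, Real.cos_zero, sh]
    field_simp
    ring
  have dC3 : HasDerivAt C 0 (a+2*h) := by
    have hd := (((hasDerivAt_w a (a+2*h)).mul ((hasDerivAt_y (a+3*h) (a+2*h)).pow 2)).add
        ((hasDerivAt_y (a+4*h) (a+2*h)).mul (((hasDerivAt_w (a+h) (a+2*h)).mul
        (hasDerivAt_y (a+3*h) (a+2*h))).add ((hasDerivAt_y (a+4*h) (a+2*h)).mul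
        (hasDerivAt_w (a+2*h) (a+2*h)))))).const_mul (1/γ)
    refine hd.congr_deriv ?_
    simp only [Pi.pow_apply, Pi.mul_apply, Pi.add_apply]
    rw [hγdef,
      show (a + 2*h - a)/2 = h by ring,
      show (a + 2*h - (a+h))/2 = h/2 by ring,
      show (a + 3*h - (a+2*h))/2 = h/2 by ring,
      show (a + 4*h - (a+2*h))/2 = h by ring,
      show (a + 2*h - (a+2*h))/2 = (0:ℝ) by ring,
      Real.sin_zero, Real.cos_zero, sh]
    field_simp
    ring
  have dC4 : HasDerivAt C (-((3/4)/Real.sin (3*h/2))) (a+3*h) := by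
    have hd := (((hasDerivAt_w a (a+3*h)).mul ((hasDerivAt_y (a+3*h) (a+3*h)).pow 2)).add
        ((hasDerivAt_y (a+4*h) (a+3*h)).mul (((hasDerivAt_w (a+h) (a+3*h)).mul
        (hasDerivAt_y (a+3*h) (a+3*h))).add ((hasDerivAt_y (a+4*h) (a+3*h)).mul
        (hasDerivAt_w (a+2*h) (a+3*h)))))).const_mul (1/γ)
    refine hd.congr_deriv ?_
    simp only [Pi.pow_apply, Pi.mul_apply, Pi.add_apply]
    rw [hγdef,
      show (a + 3*h - a)/2 = 3*h/2 by ring,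
      show (a + 3*h - (a+h))/2 = h by ring,
      show (a + 3*h - (a+2*h))/2 = h/2 by ring,
      show (a + 4*h - (a+3*h))/2 = h/2 by ring,
      show (a + 3*h - (a+3*h))/2 = (0:ℝ) by ring,
      Real.sin_zero, Real.cos_zero, sh]
    field_simp
    ring
  have dD4 : HasDerivAt D (-((3/4)/Real.sin (3*h/2))) (a+3*h) := by
    have hd := ((hasDerivAt_y (a+4*h) (a+3*h)).pow 3).const_mul (1/γ)
    refine hd.congr_deriv ?_
    rw [hγdef, sh, show (a + 4*h - (a+3*h))/2 = h/2 by ring]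
    field_simp
    ring
  -- continuity values at the knots
  have vAB : A (a+h) = B (a+h) := by
    rw [hA, hB]
    simp only
    rw [show (a + h - a)/2 = h/2 by ring,
      show (a + 2*h - (a+h))/2 = h/2 by ring,
      show (a + 3*h - (a+h))/2 = h by ring,
      show (a + 4*h - (a+h))/2 = 3*h/2 by ring,
      show (a + h - (a+h))/2 = (0:ℝ) by ring,
      Real.sin_zero]
    ring
  have vBC : B (a+2*h) = C (a+2*h) := by
    rw [hB, hC]
    simp only
    rw [show (a + 2*h - a)/2 = h by ring,
      show (a + 2*h - (a+h))/2 = h/2 by ring,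
      show (a + 3*h - (a+2*h))/2 = h/2 by ring,
      show (a + 4*h - (a+2*h))/2 = h by ring,
      show (a + 2*h - (a+2*h))/2 = (0:ℝ) by ring,
      Real.sin_zero]
    ring
  have vCD : C (a+3*h) = D (a+3*h) := by
    rw [hC, hD]
    simp only
    rw [show (a + 3*h - a)/2 = 3*h/2 by ring,
      show (a + 3*h - (a+h))/2 = h by ring,
      show (a + 3*h - (a+2*h))/2 = h/2 by ring,
      show (a + 4*h - (a+3*h))/2 = h/2 by ring,
      show (a + 3*h - (a+3*h))/2 = (0:ℝ) by ring,
      Real.sin_zero, sh]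
    ring
  -- the spline agrees with the pieces on the relevant intervals
  have TA : ∀ x, a ≤ x → x ≤ a + h → trigBSplineAux h a x = A x := by
    intro x hx1 hx2
    simp only [trigBSplineAux, Set.mem_Icc, ← hγdef]
    rw [if_pos ⟨hx1, hx2⟩, hA]
  have TB : ∀ x, a + h < x → x ≤ a + 2*h → trigBSplineAux h a x = B x := by
    intro x hx1 hx2
    simp only [trigBSplineAux, Set.mem_Icc, ← hγdef]
    rw [if_neg (fun hcon => absurd hcon.2 (not_le.mpr hx1)), if_pos ⟨le_of_lt hx1, hx2⟩, hB]
  have TC : ∀ x, a + 2*h < x → x ≤ a + 3*h → trigBSplineAux h a x = C x := by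
    intro x hx1 hx2
    simp only [trigBSplineAux, Set.mem_Icc, ← hγdef]
    rw [if_neg (fun hcon => absurd hcon.2 (by linarith)),
      if_neg (fun hcon => absurd hcon.2 (not_le.mpr hx1)), if_pos ⟨le_of_lt hx1, hx2⟩, hC]
  have TD : ∀ x, a + 3*h < x → x ≤ a + 4*h → trigBSplineAux h a x = D x := by
    intro x hx1 hx2
    simp only [trigBSplineAux, Set.mem_Icc, ← hγdef]
    rw [if_neg (fun hcon => absurd hcon.2 (by linarith)),
      if_neg (fun hcon => absurd hcon.2 (by linarith)),
      if_neg (fun hcon => absurd hcon.2 (not_le.mpr hx1)), if_pos ⟨le_of_lt hx1, hx2⟩, hD]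
  -- values of the spline AT the three knots
  have T2 : trigBSplineAux h a (a+h) = A (a+h) := TA _ (by linarith) (by linarith)
  have T3 : trigBSplineAux h a (a+2*h) = B (a+2*h) := TB _ (by linarith) (by linarith)
  have T4 : trigBSplineAux h a (a+3*h) = C (a+3*h) := TC _ (by linarith) (by linarith)
  refine ⟨?_, ?_, ?_⟩
  · -- at a + h
    have hL : HasDerivWithinAt (trigBSplineAux h a) ((3/4)/Real.sin (3*h/2))
        (Set.Iic (a+h)) (a+h) := by
      refine (dA2.hasDerivWithinAt).congr_of_eventuallyEq ?_ T2
      filter_upwards [nhdsWithin_le_nhds (Ici_mem_nhds (show a < a+h by linarith)),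
        self_mem_nhdsWithin] with x hx1 hx2
      exact TA x hx1 hx2
    have hR : HasDerivWithinAt (trigBSplineAux h a) ((3/4)/Real.sin (3*h/2))
        (Set.Ici (a+h)) (a+h) := by
      refine (dB2.hasDerivWithinAt).congr_of_eventuallyEq ?_ (T2.trans vAB)
      filter_upwards [nhdsWithin_le_nhds (Iic_mem_nhds (show a+h < a+2*h by linarith)),
        self_mem_nhdsWithin] with x hx1 hx2
      rcases eq_or_lt_of_le (Set.mem_Ici.mp hx2 : a + h ≤ x) with he | hlt
      · rw [← he, T2, vAB]
      · exact TB x hlt hx1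
    have := hL.union hR
    rw [Set.Iic_union_Ici] at this
    exact hasDerivWithinAt_univ.mp this
  · -- at a + 2h
    have hL : HasDerivWithinAt (trigBSplineAux h a) 0 (Set.Iic (a+2*h)) (a+2*h) := by
      refine (dB3.hasDerivWithinAt).congr_of_eventuallyEq ?_ T3
      filter_upwards [nhdsWithin_le_nhds (Ioi_mem_nhds (show a+h < a+2*h by linarith)),
        self_mem_nhdsWithin] with x hx1 hx2
      exact TB x hx1 hx2
    have hR : HasDerivWithinAt (trigBSplineAux h a) 0 (Set.Ici (a+2*h)) (a+2*h) := by
      refine (dC3.hasDerivWithinAt).congr_of_eventuallyEq ?_ (T3.trans vBC)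
      filter_upwards [nhdsWithin_le_nhds (Iic_mem_nhds (show a+2*h < a+3*h by linarith)),
        self_mem_nhdsWithin] with x hx1 hx2
      rcases eq_or_lt_of_le (Set.mem_Ici.mp hx2 : a + 2*h ≤ x) with he | hlt
      · rw [← he, T3, vBC]
      · exact TC x hlt hx1
    have := hL.union hR
    rw [Set.Iic_union_Ici] at this
    exact hasDerivWithinAt_univ.mp this
  · -- at a + 3h
    have hL : HasDerivWithinAt (trigBSplineAux h a) (-((3/4)/Real.sin (3*h/2)))
        (Set.Iic (a+3*h)) (a+3*h) := by
      refine (dC4.hasDerivWithinAt).congr_of_eventuallyEq ?_ T4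
      filter_upwards [nhdsWithin_le_nhds (Ioi_mem_nhds (show a+2*h < a+3*h by linarith)),
        self_mem_nhdsWithin] with x hx1 hx2
      exact TC x hx1 hx2
    have hR : HasDerivWithinAt (trigBSplineAux h a) (-((3/4)/Real.sin (3*h/2)))
        (Set.Ici (a+3*h)) (a+3*h) := by
      refine (dD4.hasDerivWithinAt).congr_of_eventuallyEq ?_ (T4.trans vCD)
      filter_upwards [nhdsWithin_le_nhds (Iic_mem_nhds (show a+3*h < a+4*h by linarith)),
        self_mem_nhdsWithin] with x hx1 hx2
      rcases eq_or_lt_of_le (Set.mem_Ici.mp hx2 : a + 3*h ≤ x) with he | hlt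
      · rw [← he, T4, vCD]
      · exact TD x hlt hx1
    have := hL.union hR
    rw [Set.Iic_union_Ici] at this
    exact hasDerivWithinAt_univ.mp this

/-- For `0 < h < 2π/3`, the trigonometric cubic B-spline `T_i` is
differentiable at the knots `x_{i-1}`, `x_i`, `x_{i+1}`, with derivative values
`T_i′(x_{i-1}) = (3/4)/sin(3h/2)`, `T_i′(x_i) = 0`, `T_i′(x_{i+1}) = −(3/4)/sin(3h/2)`. -/
theorem trigBSpline_deriv_at_knots (h x₀ : ℝ) (h0 : 0 < h) (h1 : h < 2 * Real.pi / 3)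
    (i : ℤ) :
    HasDerivAt (trigBSpline h x₀ i) ((3 / 4) / Real.sin (3 * h / 2)) (knot h x₀ (i - 1)) ∧
    HasDerivAt (trigBSpline h x₀ i) 0 (knot h x₀ i) ∧
    HasDerivAt (trigBSpline h x₀ i) (-((3 / 4) / Real.sin (3 * h / 2))) (knot h x₀ (i + 1)) := by
  have e2 : knot h x₀ (i - 1) = knot h x₀ (i - 2) + h := by unfold knot; push_cast; ring
  have e3 : knot h x₀ i = knot h x₀ (i - 2) + 2*h := by unfold knot; push_cast; ring
  have e4 : knot h x₀ (i + 1) = knot h x₀ (i - 2) + 3*h := by unfold knot; push_cast; ring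
  have e5 : knot h x₀ (i + 2) = knot h x₀ (i - 2) + 4*h := by unfold knot; push_cast; ring
  have eT : trigBSpline h x₀ i = trigBSplineAux h (knot h x₀ (i - 2)) := by
    funext x
    simp only [trigBSpline, trigBSplineAux, e2, e3, e4, e5]
  rw [eT, e2, e3, e4]
  exact trigBSplineAux_deriv h (knot h x₀ (i - 2)) h0 h1
end

section
/- Let 0 < h < 2π/3 and let T_i be the trigonometric cubic B-spline on the uniform knots x_j = x_0 + j·h. Then T_i is twice differentiable at the knots x_{i-1} and x_{i+1}, and its second derivative there equals T_i″(x_{i-1}) = T_i″(x_{i+1}) = 3·(1 + 3·cos(h)) / (16·sin²(h/2)·(2·cos(h/2) + cos(3h/2))). -/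
open Real Set Filter Topology

noncomputable def tw (c x : ℝ) : ℝ := Real.sin ((x - c) / 2)
noncomputable def ty (c x : ℝ) : ℝ := Real.sin ((c - x) / 2)
noncomputable def tcw (c x : ℝ) : ℝ := Real.cos ((x - c) / 2)
noncomputable def tcy (c x : ℝ) : ℝ := Real.cos ((c - x) / 2)

lemma hasDerivAt_tw (c x : ℝ) : HasDerivAt (tw c) (tcw c x * (1/2)) x := by
  have h1 : HasDerivAt (fun z : ℝ => (z - c) / 2) (1/2) x := by
    simpa using ((hasDerivAt_id x).sub_const c).div_const 2
  have := (Real.hasDerivAt_sin ((x - c)/2)).comp x h1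
  exact this

lemma hasDerivAt_ty (c x : ℝ) : HasDerivAt (ty c) (-tcy c x * (1/2)) x := by
  have h1 : HasDerivAt (fun z : ℝ => (c - z) / 2) (-1 / 2) x := by
    exact ((hasDerivAt_id x).const_sub c).div_const 2
  have := (Real.hasDerivAt_sin ((c - x)/2)).comp x h1
  have e : Real.cos ((c - x)/2) * (-1/2) = -tcy c x * (1/2) := by simp [tcy]; ring
  rw [← e]; exact this

lemma hasDerivAt_tcw (c x : ℝ) : HasDerivAt (tcw c) (-tw c x * (1/2)) x := by
  have h1 : HasDerivAt (fun z : ℝ => (z - c) / 2) (1/2) x := by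
    simpa using ((hasDerivAt_id x).sub_const c).div_const 2
  have := (Real.hasDerivAt_cos ((x - c)/2)).comp x h1
  exact this

lemma hasDerivAt_tcy (c x : ℝ) : HasDerivAt (tcy c) (ty c x * (1/2)) x := by
  have h1 : HasDerivAt (fun z : ℝ => (c - z) / 2) (-1 / 2) x := by
    exact ((hasDerivAt_id x).const_sub c).div_const 2
  have := (Real.hasDerivAt_cos ((c - x)/2)).comp x h1
  have e : -Real.sin ((c - x)/2) * (-1/2) = ty c x * (1/2) := by simp [ty]; ring
  rw [← e]; exact this

open Set in
lemma glue {f g1 g2 g1' g2' : ℝ → ℝ} {a ε d L : ℝ} (hε : 0 < ε)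
    (h1 : ∀ x ∈ Ioc (a - ε) a, f x = g1 x)
    (h2 : ∀ x ∈ Ioo a (a + ε), f x = g2 x)
    (hval : g1 a = g2 a)
    (hg1 : ∀ x, HasDerivAt g1 (g1' x) x)
    (hg2 : ∀ x, HasDerivAt g2 (g2' x) x)
    (hd1 : g1' a = d) (hd2 : g2' a = d)
    (hL1 : HasDerivAt g1' L a) (hL2 : HasDerivAt g2' L a) :
    HasDerivAt (deriv f) L a := by
  have hIoc : Ioc (a - ε) a ∈ 𝓝[≤] a := Ioc_mem_nhdsLE (by linarith)
  have hIco : Ico a (a + ε) ∈ 𝓝[≥] a := Ico_mem_nhdsGE (by linarith)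
  have hfa : f a = g1 a := h1 a ⟨by linarith, le_rfl⟩
  have hdl : ∀ x ∈ Ioo (a - ε) a, deriv f x = g1' x := by
    intro x hx
    have hev : f =ᶠ[nhds x] g1 := by
      filter_upwards [Ioo_mem_nhds hx.1 hx.2] with y hy
      exact h1 y ⟨hy.1, hy.2.le⟩
    rw [hev.deriv_eq, (hg1 x).deriv]
  have hdr : ∀ x ∈ Ioo a (a + ε), deriv f x = g2' x := by
    intro x hx
    have hev : f =ᶠ[nhds x] g2 := by
      filter_upwards [Ioo_mem_nhds hx.1 hx.2] with y hy
      exact h2 y hy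
    rw [hev.deriv_eq, (hg2 x).deriv]
  have hfd : HasDerivAt f d a := by
    have hl : HasDerivWithinAt f d (Iic a) a := by
      refine HasDerivWithinAt.congr_of_eventuallyEq
        (hd1 ▸ (hg1 a).hasDerivWithinAt) ?_ hfa
      filter_upwards [hIoc] with y hy using h1 y hy
    have hr : HasDerivWithinAt f d (Ici a) a := by
      refine HasDerivWithinAt.congr_of_eventuallyEq
        (hd2 ▸ (hg2 a).hasDerivWithinAt) ?_ (hfa.trans hval)
      filter_upwards [hIco] with y hy
      rcases eq_or_lt_of_le hy.1 with rfl | hlt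
      · exact hfa.trans hval
      · exact h2 y ⟨hlt, hy.2⟩
    have := hl.union hr
    rwa [Iic_union_Ici, hasDerivWithinAt_univ] at this
  have hda : deriv f a = d := hfd.deriv
  have hl : HasDerivWithinAt (deriv f) L (Iic a) a := by
    refine HasDerivWithinAt.congr_of_eventuallyEq hL1.hasDerivWithinAt ?_ (by rw [hda, hd1])
    filter_upwards [hIoc] with y hy
    rcases eq_or_lt_of_le hy.2 with rfl | hlt
    · rw [hda, hd1]
    · exact hdl y ⟨hy.1, hlt⟩
  have hr : HasDerivWithinAt (deriv f) L (Ici a) a := by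
    refine HasDerivWithinAt.congr_of_eventuallyEq hL2.hasDerivWithinAt ?_ (by rw [hda, hd2])
    filter_upwards [hIco] with y hy
    rcases eq_or_lt_of_le hy.1 with rfl | hlt
    · rw [hda, hd2]
    · exact hdr y ⟨hlt, hy.2⟩
  have := hl.union hr
  rwa [Iic_union_Ici, hasDerivWithinAt_univ] at this

noncomputable def P1 (γ p x : ℝ) : ℝ := (1/γ) * tw p x ^ 3
noncomputable def D1 (γ p x : ℝ) : ℝ := (3/(2*γ)) * (tw p x ^ 2 * tcw p x)

noncomputable def P2 (γ p q r s u x : ℝ) : ℝ :=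
  (1/γ) * (tw p x * (tw p x * ty r x + ty s x * tw q x) + ty u x * tw q x ^ 2)

noncomputable def D2 (γ p q r s u x : ℝ) : ℝ :=
  (1/(2*γ)) * ( tcw p x * (tw p x * ty r x + ty s x * tw q x)
    + tw p x * (tcw p x * ty r x - tw p x * tcy r x - tcy s x * tw q x + ty s x * tcw q x)
    - tcy u x * tw q x ^ 2 + 2 * ty u x * tw q x * tcw q x )

lemma hasDerivAt_P1 (γ p x : ℝ) : HasDerivAt (fun z => P1 γ p z) (D1 γ p x) x := by
  have h0 := ((hasDerivAt_tw p x).pow 3).const_mul (1/γ)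
  refine h0.congr_deriv ?_
  simp [D1]; push_cast; ring

lemma hasDerivAt_P2 (γ p q r s u x : ℝ) :
    HasDerivAt (fun z => P2 γ p q r s u z) (D2 γ p q r s u x) x := by
  have hB := ((hasDerivAt_tw p x).mul (hasDerivAt_ty r x)).add
    ((hasDerivAt_ty s x).mul (hasDerivAt_tw q x))
  have h0 := (((hasDerivAt_tw p x).mul hB).add
    ((hasDerivAt_ty u x).mul ((hasDerivAt_tw q x).pow 2))).const_mul (1/γ)
  refine h0.congr_deriv ?_
  simp [D2]; push_cast; ring

lemma hasDerivAt_D1 (γ p x : ℝ) :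
    HasDerivAt (fun z => D1 γ p z)
      ((3/(2*γ)) * (tw p x * tcw p x ^ 2 - tw p x ^ 3 * (1/2))) x := by
  have h0 := (((hasDerivAt_tw p x).pow 2).mul (hasDerivAt_tcw p x)).const_mul (3/(2*γ))
  refine h0.congr_deriv ?_
  simp only [Pi.pow_apply]; push_cast; ring

lemma hasDerivAt_reflect {F : ℝ → ℝ} {v : ℝ} (b x : ℝ) (hF : HasDerivAt F v (2*b - x)) :
    HasDerivAt (fun z => F (2*b - z)) (-v) x := by
  have hi : HasDerivAt (fun z : ℝ => 2*b - z) (-1) x := (hasDerivAt_id x).const_sub (2*b)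
  have := hF.comp x hi
  simpa [Function.comp_def] using this

section Key
variable {h a : ℝ}

lemma trig_facts (h0 : 0 < h) (h1 : h < 2 * Real.pi / 3) :
    0 < Real.sin (h/2) ∧ 1/2 < Real.cos (h/2) ∧ 0 < Real.sin h ∧ 0 < Real.sin (3*h/2) := by
  have hpi := Real.pi_pos
  refine ⟨Real.sin_pos_of_pos_of_lt_pi (by linarith) (by linarith), ?_, 
    Real.sin_pos_of_pos_of_lt_pi (by linarith) (by linarith),
    Real.sin_pos_of_pos_of_lt_pi (by linarith) (by linarith)⟩
  have := Real.cos_lt_cos_of_nonneg_of_le_pi (x := h/2) (y := Real.pi/3)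
    (by linarith) (by linarith) (by linarith)
  rw [Real.cos_pi_div_three] at this
  linarith

lemma key1 (h0 : 0 < h) (h1 : h < 2 * Real.pi / 3) :
    HasDerivAt (fun z => D1 (Real.sin (h/2) * Real.sin h * Real.sin (3*h/2)) (a - h) z)
      (3 * (1 + 3 * Real.cos h) /
        (16 * Real.sin (h / 2) ^ 2 * (2 * Real.cos (h / 2) + Real.cos (3 * h / 2)))) a := by
  obtain ⟨hS, hC, hsh, hs3⟩ := trig_facts h0 h1
  have h0' := hasDerivAt_D1 (Real.sin (h/2) * Real.sin h * Real.sin (3*h/2)) (a - h) a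
  convert h0' using 1
  simp only [tw, tcw, show a - (a - h) = h from by ring]
  have hsin2 := Real.sin_two_mul (h/2)
  have hcos2 := Real.cos_two_mul (h/2)
  have hsin3 := Real.sin_three_mul (h/2)
  have hcos3 := Real.cos_three_mul (h/2)
  rw [show 2*(h/2) = h from by ring] at hsin2 hcos2
  rw [show 3*(h/2) = 3*h/2 from by ring] at hsin3 hcos3
  rw [hsin2, hcos2, hsin3, hcos3]
  have hS' : Real.sin (h/2) ≠ 0 := ne_of_gt hS
  have hC0 : (0:ℝ) < Real.cos (h/2) := by linarith
  have hC' : Real.cos (h/2) ≠ 0 := ne_of_gt hC0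
  have h34 : 3 * Real.sin (h/2) - 4 * Real.sin (h/2)^3 ≠ 0 := by
    rw [← hsin3]; exact ne_of_gt hs3
  have hden0 : (0:ℝ) < 2*Real.cos (h/2) + (4*Real.cos (h/2)^3 - 3*Real.cos (h/2)) := by
    have e : 2*Real.cos (h/2) + (4*Real.cos (h/2)^3 - 3*Real.cos (h/2))
        = Real.cos (h/2)*(2*Real.cos (h/2)-1)*(2*Real.cos (h/2)+1) := by ring
    rw [e]
    have : (0:ℝ) < 2*Real.cos (h/2)-1 := by linarith
    positivity
  field_simp
  have hsc := Real.sin_sq_add_cos_sq (h/2)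
  rw [div_eq_div_iff (ne_of_gt (by nlinarith)) (ne_of_gt (by nlinarith))]
  linear_combination (48 - 128*Real.cos (h/2)^2) * Real.sin_sq_add_cos_sq (h/2)

lemma key2 (h0 : 0 < h) (h1 : h < 2 * Real.pi / 3) :
    HasDerivAt (fun z => D2 (Real.sin (h/2) * Real.sin h * Real.sin (3*h/2))
        (a - h) a (a + h) (a + 2*h) (a + 3*h) z)
      (3 * (1 + 3 * Real.cos h) /
        (16 * Real.sin (h / 2) ^ 2 * (2 * Real.cos (h / 2) + Real.cos (3 * h / 2)))) a := by
  obtain ⟨hS, hC, hsh, hs3⟩ := trig_facts h0 h1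
  set γ := Real.sin (h/2) * Real.sin h * Real.sin (3*h/2) with hγ
  set p := a - h; set q := a; set r := a + h; set s := a + 2*h; set u := a + 3*h
  have hB := ((hasDerivAt_tw p q).mul (hasDerivAt_ty r q)).add
    ((hasDerivAt_ty s q).mul (hasDerivAt_tw q q))
  have hC2 := ((((hasDerivAt_tcw p q).mul (hasDerivAt_ty r q)).sub
    ((hasDerivAt_tw p q).mul (hasDerivAt_tcy r q))).sub
    ((hasDerivAt_tcy s q).mul (hasDerivAt_tw q q))).add
    ((hasDerivAt_ty s q).mul (hasDerivAt_tcw q q))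
  have hT4 := (((hasDerivAt_ty u q).const_mul 2).mul (hasDerivAt_tw q q)).mul (hasDerivAt_tcw q q)
  have hh0 := (((((hasDerivAt_tcw p q).mul hB).add ((hasDerivAt_tw p q).mul hC2)).sub
    ((hasDerivAt_tcy u q).mul ((hasDerivAt_tw q q).pow 2))).add hT4).const_mul (1/(2*γ))
  simp only [D2]
  refine hh0.congr_deriv ?_
  simp only [Pi.mul_apply, Pi.add_apply, Pi.sub_apply, Pi.pow_apply]
  simp only [tw, ty, tcw, tcy, p, q, r, s, u,
    show a - (a - h) = h from by ring, show a + h - a = h from by ring,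
    show a + 2*h - a = 2*h from by ring, show a + 3*h - a = 3*h from by ring,
    show a - a = 0 from by ring, show (2*h)/2 = h from by ring, zero_div,
    Real.sin_zero, Real.cos_zero]
  have hsin2 := Real.sin_two_mul (h/2)
  have hcos2 := Real.cos_two_mul (h/2)
  have hsin3 := Real.sin_three_mul (h/2)
  have hcos3 := Real.cos_three_mul (h/2)
  rw [show 2*(h/2) = h from by ring] at hsin2 hcos2
  rw [show 3*(h/2) = 3*h/2 from by ring] at hsin3 hcos3
  rw [hγ, hsin2, hcos2, hsin3, hcos3]
  have hS' : Real.sin (h/2) ≠ 0 := ne_of_gt hS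
  have hC0 : (0:ℝ) < Real.cos (h/2) := by linarith
  have hC' : Real.cos (h/2) ≠ 0 := ne_of_gt hC0
  have h34 : 3 * Real.sin (h/2) - 4 * Real.sin (h/2)^3 ≠ 0 := by
    rw [← hsin3]; exact ne_of_gt hs3
  have hden0 : (0:ℝ) < 2*Real.cos (h/2) + (4*Real.cos (h/2)^3 - 3*Real.cos (h/2)) := by
    have e : 2*Real.cos (h/2) + (4*Real.cos (h/2)^3 - 3*Real.cos (h/2))
        = Real.cos (h/2)*(2*Real.cos (h/2)-1)*(2*Real.cos (h/2)+1) := by ring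
    rw [e]
    have : (0:ℝ) < 2*Real.cos (h/2)-1 := by linarith
    positivity
  field_simp
  have hsc := Real.sin_sq_add_cos_sq (h/2)
  rw [div_eq_div_iff (ne_of_gt (by nlinarith)) (ne_of_gt (by nlinarith))]
  linear_combination (-128*Real.sin (h/2)*Real.cos (h/2)^2
    - 16*Real.sin (h/2)) * Real.sin_sq_add_cos_sq (h/2)

lemma valP (γ h a : ℝ) : P1 γ (a-h) a = P2 γ (a-h) a (a+h) (a+2*h) (a+3*h) a := by
  simp only [P1, P2, tw, ty, show a - (a-h) = h from by ring, show a + h - a = h from by ring,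
    show a + 2*h - a = 2*h from by ring, show a + 3*h - a = 3*h from by ring,
    show a - a = 0 from by ring, zero_div, Real.sin_zero]
  ring

lemma derD :
    D1 (Real.sin (h/2) * Real.sin h * Real.sin (3*h/2)) (a-h) a
      = D2 (Real.sin (h/2) * Real.sin h * Real.sin (3*h/2)) (a-h) a (a+h) (a+2*h) (a+3*h) a := by
  have hsin2 := Real.sin_two_mul (h/2)
  rw [show 2*(h/2) = h from by ring] at hsin2
  simp only [D1, D2, tw, ty, tcw, tcy, show a - (a-h) = h from by ring,
    show a + h - a = h from by ring, show a + 2*h - a = 2*h from by ring,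
    show a + 3*h - a = 3*h from by ring, show a - a = 0 from by ring,
    show (2*h)/2 = h from by ring, zero_div,
    Real.sin_zero, Real.cos_zero, hsin2]
  ring
end Key

/-- For `0 < h < 2π/3`, the trigonometric cubic B-spline `T_i` is twice
differentiable at the knots `x_{i-1}` and `x_{i+1}`, with second derivative
`T_i″(x_{i-1}) = T_i″(x_{i+1}) = 3·(1 + 3·cos(h)) / (16·sin²(h/2)·(2·cos(h/2) + cos(3h/2)))`. -/
theorem trigBSpline_secondDeriv_adjacent (h x₀ : ℝ) (h0 : 0 < h) (h1 : h < 2 * Real.pi / 3)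
    (i : ℤ) :
    HasDerivAt (deriv (trigBSpline h x₀ i))
      (3 * (1 + 3 * Real.cos h) /
        (16 * Real.sin (h / 2) ^ 2 * (2 * Real.cos (h / 2) + Real.cos (3 * h / 2))))
      (knot h x₀ (i - 1)) ∧
    HasDerivAt (deriv (trigBSpline h x₀ i))
      (3 * (1 + 3 * Real.cos h) /
        (16 * Real.sin (h / 2) ^ 2 * (2 * Real.cos (h / 2) + Real.cos (3 * h / 2))))
      (knot h x₀ (i + 1)) := by
  set γ := Real.sin (h/2) * Real.sin h * Real.sin (3*h/2) with hγ
  set a := knot h x₀ (i - 1) with ha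
  have e2 : knot h x₀ (i-2) = a - h := by rw [ha]; simp only [knot]; push_cast; ring
  have e0 : knot h x₀ i = a + h := by rw [ha]; simp only [knot]; push_cast; ring
  have e1 : knot h x₀ (i+1) = a + 2*h := by rw [ha]; simp only [knot]; push_cast; ring
  have e2p : knot h x₀ (i+2) = a + 3*h := by rw [ha]; simp only [knot]; push_cast; ring
  -- piecewise identifications
  have hfL1 : ∀ x ∈ Set.Ioc (a - h) a, trigBSpline h x₀ i x = P1 γ (a-h) x := by
    intro x hx
    have hmem : x ∈ Set.Icc (knot h x₀ (i-2)) (knot h x₀ (i-1)) := by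
      rw [e2, ← ha]; exact ⟨hx.1.le, hx.2⟩
    simp only [trigBSpline]
    rw [if_pos hmem]
    simp only [P1, tw, e2, hγ]
  have hfR1 : ∀ x ∈ Set.Ioo a (a + h), trigBSpline h x₀ i x
      = P2 γ (a-h) a (a+h) (a+2*h) (a+3*h) x := by
    intro x hx
    have hnot : x ∉ Set.Icc (knot h x₀ (i-2)) (knot h x₀ (i-1)) := by
      intro hc
      rw [← ha] at hc
      exact absurd hc.2 (not_le.mpr hx.1)
    have hmem : x ∈ Set.Icc (knot h x₀ (i-1)) (knot h x₀ i) := by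
      rw [e0, ← ha]; exact ⟨hx.1.le, hx.2.le⟩
    simp only [trigBSpline]
    rw [if_neg hnot, if_pos hmem]
    simp only [P2, tw, ty, e2, e0, e1, e2p, ← ha, hγ]
  have hfL2 : ∀ x ∈ Set.Ioc (a + 2*h - h) (a + 2*h), trigBSpline h x₀ i x
      = P2 γ (a-h) a (a+h) (a+2*h) (a+3*h) (2*(a+h) - x) := by
    intro x hx
    have hx1 : a + h < x := by have := hx.1; linarith
    have hnot1 : x ∉ Set.Icc (knot h x₀ (i-2)) (knot h x₀ (i-1)) := by
      intro hc; rw [← ha] at hc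
      have := hc.2; have := hx.1; linarith
    have hnot2 : x ∉ Set.Icc (knot h x₀ (i-1)) (knot h x₀ i) := by
      intro hc; rw [e0] at hc
      have := hc.2; have := hx.1; linarith
    have hmem : x ∈ Set.Icc (knot h x₀ i) (knot h x₀ (i+1)) := by
      rw [e0, e1]; exact ⟨hx1.le, hx.2⟩
    simp only [trigBSpline]
    rw [if_neg hnot1, if_neg hnot2, if_pos hmem]
    simp only [P2, tw, ty, e2, e0, e1, e2p, ← ha, hγ]
    ring_nf
  have hfR2 : ∀ x ∈ Set.Ioo (a + 2*h) (a + 2*h + h), trigBSpline h x₀ i x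
      = P1 γ (a-h) (2*(a+h) - x) := by
    intro x hx
    have hx2 : x < a + 3*h := by have := hx.2; linarith
    have hnot1 : x ∉ Set.Icc (knot h x₀ (i-2)) (knot h x₀ (i-1)) := by
      intro hc; rw [← ha] at hc
      have := hc.2; have := hx.1; linarith
    have hnot2 : x ∉ Set.Icc (knot h x₀ (i-1)) (knot h x₀ i) := by
      intro hc; rw [e0] at hc
      have := hc.2; have := hx.1; linarith
    have hnot3 : x ∉ Set.Icc (knot h x₀ i) (knot h x₀ (i+1)) := by
      intro hc; rw [e1] at hc
      have := hc.2; have := hx.1; linarith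
    have hmem : x ∈ Set.Icc (knot h x₀ (i+1)) (knot h x₀ (i+2)) := by
      rw [e1, e2p]; exact ⟨hx.1.le, hx2.le⟩
    simp only [trigBSpline]
    rw [if_neg hnot1, if_neg hnot2, if_neg hnot3, if_pos hmem]
    simp only [P1, tw, ty, e2, e0, e1, e2p, ← ha, hγ]
    ring_nf
  constructor
  · -- at knot (i-1) = a
    refine glue (g1 := fun z => P1 γ (a-h) z) (g2 := fun z => P2 γ (a-h) a (a+h) (a+2*h) (a+3*h) z)
      (g1' := fun z => D1 γ (a-h) z) (g2' := fun z => D2 γ (a-h) a (a+h) (a+2*h) (a+3*h) z)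
      (d := D1 γ (a-h) a) h0 hfL1 hfR1 (valP γ h a)
      (fun x => hasDerivAt_P1 γ (a-h) x) (fun x => hasDerivAt_P2 γ (a-h) a (a+h) (a+2*h) (a+3*h) x)
      rfl derD.symm ?_ ?_
    · exact hγ ▸ key1 h0 h1
    · exact hγ ▸ key2 h0 h1
  · -- at knot (i+1) = a + 2h
    rw [e1]
    have hrefl : ∀ x : ℝ, 2*(a+h) - (a + 2*h) = a := fun _ => by ring
    refine glue (g1 := fun z => P2 γ (a-h) a (a+h) (a+2*h) (a+3*h) (2*(a+h) - z))
      (g2 := fun z => P1 γ (a-h) (2*(a+h) - z))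
      (g1' := fun z => -(D2 γ (a-h) a (a+h) (a+2*h) (a+3*h) (2*(a+h) - z)))
      (g2' := fun z => -(D1 γ (a-h) (2*(a+h) - z)))
      (d := -(D1 γ (a-h) a)) h0 hfL2 hfR2 ?_ ?_ ?_ ?_ ?_ ?_ ?_
    · simp only [hrefl 0]; exact (valP γ h a).symm
    · intro x
      exact hasDerivAt_reflect (a+h) x (hasDerivAt_P2 γ (a-h) a (a+h) (a+2*h) (a+3*h) (2*(a+h) - x))
    · intro x
      exact hasDerivAt_reflect (a+h) x (hasDerivAt_P1 γ (a-h) (2*(a+h) - x))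
    · simp only [hrefl 0]; exact congrArg Neg.neg derD.symm
    · simp only [hrefl 0]
    · -- second derivative of g1' at a+2h
      have hk : HasDerivAt (fun z => D2 γ (a-h) a (a+h) (a+2*h) (a+3*h) z)
          (3 * (1 + 3 * Real.cos h) /
            (16 * Real.sin (h / 2) ^ 2 * (2 * Real.cos (h / 2) + Real.cos (3 * h / 2))))
          (2*(a+h) - (a + 2*h)) := by
        rw [hrefl 0]; exact hγ ▸ key2 h0 h1
      have := (hasDerivAt_reflect (a+h) (a + 2*h) hk).neg
      simpa [Pi.neg_def] using this
    · have hk : HasDerivAt (fun z => D1 γ (a-h) z)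
          (3 * (1 + 3 * Real.cos h) /
            (16 * Real.sin (h / 2) ^ 2 * (2 * Real.cos (h / 2) + Real.cos (3 * h / 2))))
          (2*(a+h) - (a + 2*h)) := by
        rw [hrefl 0]; exact hγ ▸ key1 h0 h1
      have := (hasDerivAt_reflect (a+h) (a + 2*h) hk).neg
      simpa [Pi.neg_def] using this
end

section
/- Let 0 < h < 2π/3, let N ≥ 1, let x_j = x_0 + j·h, and let T_{-1}, T_0, …, T_{N+1} be the trigonometric cubic B-splines on these knots. Then the restrictions of T_{-1}, T_0, …, T_{N+1} to the interval [x_0, x_N] are linearly independent: if real numbers δ_{-1}, …, δ_{N+1} satisfy Σ_{i=-1}^{N+1} δ_i·T_i(x) = 0 for all x ∈ [x_0, x_N], then δ_i = 0 for every i with −1 ≤ i ≤ N+1. -/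
open Real

lemma knot_le (h x₀ : ℝ) (h0 : 0 < h) {a b : ℤ} (hab : a ≤ b) : knot h x₀ a ≤ knot h x₀ b := by
  simp only [knot]
  have : (a : ℝ) ≤ (b : ℝ) := by exact_mod_cast hab
  nlinarith

lemma knot_lt (h x₀ : ℝ) (h0 : 0 < h) {a b : ℤ} (hab : a < b) : knot h x₀ a < knot h x₀ b := by
  simp only [knot]
  have : (a : ℝ) < (b : ℝ) := by exact_mod_cast hab
  nlinarith

lemma analyticOnNhd_rsin : AnalyticOnNhd ℝ Real.sin Set.univ := by
  have h1 : Real.sin = fun x : ℝ => (Complex.sin x).re := by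
    funext x; rw [Complex.sin_ofReal_re]
  rw [h1]
  intro x _
  exact (Complex.reCLM.analyticAt _).comp
    (((Complex.differentiable_sin.analyticAt _).restrictScalars).comp
      (Complex.ofRealCLM.analyticAt x))

lemma an_sin_w (c : ℝ) : AnalyticOnNhd ℝ (fun x : ℝ => Real.sin ((x - c) / 2)) Set.univ := by
  intro x _
  have hinner : AnalyticAt ℝ (fun x : ℝ => (x - c) / 2) x := by
    apply AnalyticAt.div
    · exact analyticAt_id.sub analyticAt_const
    · exact analyticAt_const
    · norm_num
  exact (analyticOnNhd_rsin _ (Set.mem_univ _)).comp hinner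

lemma an_sin_y (c : ℝ) : AnalyticOnNhd ℝ (fun x : ℝ => Real.sin ((c - x) / 2)) Set.univ := by
  intro x _
  have hinner : AnalyticAt ℝ (fun x : ℝ => (c - x) / 2) x := by
    apply AnalyticAt.div
    · exact analyticAt_const.sub analyticAt_id
    · exact analyticAt_const
    · norm_num
  exact (analyticOnNhd_rsin _ (Set.mem_univ _)).comp hinner

lemma det_key (h : ℝ) :
    4*(Real.sin (h / 2)) ^ 4*(Real.sin h) ^ 8 + 4*(Real.sin (h / 2)) ^ 6*(Real.sin h) ^ 4*(Real.sin (3 * h / 2)) ^ 2 - 5*(Real.sin (h / 2)) ^ 6*(Real.sin h) ^ 6 + (Real.sin (h / 2)) ^ 8*(Real.sin (3 * h / 2)) ^ 4 - 2*(Real.sin (h / 2)) ^ 8*(Real.sin h) ^ 2*(Real.sin (3 * h / 2)) ^ 2 + 2*(Real.sin (h / 2)) ^ 8*(Real.sin h) ^ 3*(Real.sin (2 * h)) + (Real.sin (h / 2)) ^ 8*(Real.sin h) ^ 4 - 1*(Real.sin (h / 2)) ^ 10*(Real.sin (2 * h)) ^ 2 - 2*(Real.sin (h / 2)) ^ 10*(Real.sin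 (3 * h / 2)) ^ 2 - 4*(Real.sin (h / 2)) ^ 10*(Real.sin h)*(Real.sin (2 * h)) - 2*(Real.sin (h / 2)) ^ 10*(Real.sin h) ^ 2 + (Real.sin (h / 2)) ^ 12
    = 144 * (Real.sin (h / 2)) ^ 10 * (Real.cos (h / 2)) ^ 4 * (Real.sin (3 * h / 2)) ^ 2 := by
  have e2 : Real.sin h = 2 * Real.sin (h / 2) * Real.cos (h / 2) := by
    rw [← Real.sin_two_mul]; congr 1; ring
  have e3 : Real.sin (3 * h / 2) = 3 * Real.sin (h / 2) - 4 * Real.sin (h / 2) ^ 3 := by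
    rw [show (3 : ℝ) * h / 2 = 3 * (h / 2) by ring, Real.sin_three_mul]
  have e4 : Real.sin (2 * h) = 4 * Real.sin (h / 2) * Real.cos (h / 2) * (1 - 2 * Real.sin (h / 2) ^ 2) := by
    rw [show (2 : ℝ) * h = 2 * (h / 2) + 2 * (h / 2) by ring, Real.sin_add, Real.sin_two_mul,
      Real.cos_two_mul]
    linear_combination (8 * Real.sin (h / 2) * Real.cos (h / 2)) * (Real.sin_sq_add_cos_sq (h / 2))
  rw [e2, e3, e4]
  linear_combination (-64*(Real.sin (h / 2)) ^ 12 + 64*(Real.sin (h / 2)) ^ 12*(Real.cos (h / 2)) ^ 2 + 704*(Real.sin (h / 2)) ^ 12*(Real.cos (h / 2)) ^ 4 + 1024*(Real.sin (h / 2)) ^ 12*(Real.cos (h / 2)) ^ 6 + 320*(Real.sin (h / 2)) ^ 14 + 64*(Real.sin (h / 2)) ^ 14*(Real.cos (h / 2)) ^ 2 - 1024*(Real.sin (h / 2)) ^ 14*(Real.cos (h / 2)) ^ 4 - 512*(Real.sin (h / 2)) ^ 16 - 256*(Real.sin (h / 2)) ^ 16*(Real.cos (h / 2)) ^ 2 +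 256*(Real.sin (h / 2)) ^ 18) * (Real.sin_sq_add_cos_sq (h / 2))

noncomputable def pieceA (h x₀ : ℝ) (j : ℤ) (x : ℝ) : ℝ :=
  Real.sin ((knot h x₀ (j + 1) - x) / 2) ^ 3

noncomputable def pieceB (h x₀ : ℝ) (j : ℤ) (x : ℝ) : ℝ :=
  Real.sin ((x - knot h x₀ (j - 2)) / 2) * Real.sin ((knot h x₀ (j + 1) - x) / 2) ^ 2
    + Real.sin ((knot h x₀ (j + 2) - x) / 2) * (Real.sin ((x - knot h x₀ (j - 1)) / 2) * Real.sin ((knot h x₀ (j + 1) - x) / 2)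
      + Real.sin ((knot h x₀ (j + 2) - x) / 2) * Real.sin ((x - knot h x₀ j) / 2))

noncomputable def pieceC (h x₀ : ℝ) (j : ℤ) (x : ℝ) : ℝ :=
  Real.sin ((x - knot h x₀ (j - 1)) / 2) * (Real.sin ((x - knot h x₀ (j - 1)) / 2) * Real.sin ((knot h x₀ (j + 1) - x) / 2)
      + Real.sin ((knot h x₀ (j + 2) - x) / 2) * Real.sin ((x - knot h x₀ j) / 2))
    + Real.sin ((knot h x₀ (j + 3) - x) / 2) * Real.sin ((x - knot h x₀ j) / 2) ^ 2

noncomputable def pieceD (h x₀ : ℝ) (j : ℤ) (x : ℝ) : ℝ :=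
  Real.sin ((x - knot h x₀ j) / 2) ^ 3

noncomputable def locF (h x₀ : ℝ) (δ : ℤ → ℝ) (j : ℤ) (x : ℝ) : ℝ :=
  (1 / (Real.sin (h / 2) * Real.sin h * Real.sin (3 * h / 2))) *
    (δ (j - 1) * pieceA h x₀ j x + δ j * pieceB h x₀ j x
      + δ (j + 1) * pieceC h x₀ j x + δ (j + 2) * pieceD h x₀ j x)

lemma T_out (h x₀ : ℝ) (h0 : 0 < h) {i j : ℤ} {x : ℝ}
    (hx : x ∈ Set.Ioo (knot h x₀ j) (knot h x₀ (j + 1))) (hij : i ≤ j - 2 ∨ j + 3 ≤ i) :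
    trigBSpline h x₀ i x = 0 := by
  obtain ⟨hx1, hx2⟩ := hx
  rcases hij with hij | hij
  · have H : ∀ a b : ℤ, b ≤ j → x ∉ Set.Icc (knot h x₀ a) (knot h x₀ b) := by
      intro a b hb hc
      have := knot_le h x₀ h0 hb
      rw [Set.mem_Icc] at hc
      linarith [hc.2]
    simp only [trigBSpline]
    rw [if_neg (H _ _ (by omega)), if_neg (H _ _ (by omega)), if_neg (H _ _ (by omega)),
      if_neg (H _ _ (by omega))]
  · have H : ∀ a b : ℤ, j + 1 ≤ a → x ∉ Set.Icc (knot h x₀ a) (knot h x₀ b) := by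
      intro a b ha hc
      have := knot_le h x₀ h0 ha
      rw [Set.mem_Icc] at hc
      linarith [hc.1]
    simp only [trigBSpline]
    rw [if_neg (H _ _ (by omega)), if_neg (H _ _ (by omega)), if_neg (H _ _ (by omega)),
      if_neg (H _ _ (by omega))]

lemma T_jm1 (h x₀ : ℝ) (h0 : 0 < h) (j : ℤ) {x : ℝ}
    (hx : x ∈ Set.Ioo (knot h x₀ j) (knot h x₀ (j + 1))) :
    trigBSpline h x₀ (j - 1) x = (1 / (Real.sin (h / 2) * Real.sin h * Real.sin (3 * h / 2))) * pieceA h x₀ j x := by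
  obtain ⟨hx1, hx2⟩ := hx
  have hn : ∀ a b : ℤ, b ≤ j → x ∉ Set.Icc (knot h x₀ a) (knot h x₀ b) := by
    intro a b hb hc
    have := knot_le h x₀ h0 hb
    rw [Set.mem_Icc] at hc
    linarith [hc.2]
  simp only [trigBSpline]
  rw [show j - 1 - 2 = j - 3 by ring, show j - 1 - 1 = j - 2 by ring,
    show j - 1 + 1 = j by ring, show j - 1 + 2 = j + 1 by ring]
  rw [if_neg (hn _ _ (by omega)), if_neg (hn _ _ (by omega)), if_neg (hn _ _ (by omega)),
    if_pos ⟨hx1.le, hx2.le⟩]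
  rfl

lemma T_j (h x₀ : ℝ) (h0 : 0 < h) (j : ℤ) {x : ℝ}
    (hx : x ∈ Set.Ioo (knot h x₀ j) (knot h x₀ (j + 1))) :
    trigBSpline h x₀ j x = (1 / (Real.sin (h / 2) * Real.sin h * Real.sin (3 * h / 2))) * pieceB h x₀ j x := by
  obtain ⟨hx1, hx2⟩ := hx
  have hn : ∀ a b : ℤ, b ≤ j → x ∉ Set.Icc (knot h x₀ a) (knot h x₀ b) := by
    intro a b hb hc
    have := knot_le h x₀ h0 hb
    rw [Set.mem_Icc] at hc
    linarith [hc.2]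
  simp only [trigBSpline]
  rw [if_neg (hn _ _ (by omega)), if_neg (hn _ _ (by omega)), if_pos ⟨hx1.le, hx2.le⟩]
  rfl

lemma T_jp1 (h x₀ : ℝ) (h0 : 0 < h) (j : ℤ) {x : ℝ}
    (hx : x ∈ Set.Ioo (knot h x₀ j) (knot h x₀ (j + 1))) :
    trigBSpline h x₀ (j + 1) x = (1 / (Real.sin (h / 2) * Real.sin h * Real.sin (3 * h / 2))) * pieceC h x₀ j x := by
  obtain ⟨hx1, hx2⟩ := hx
  have hn : ∀ a b : ℤ, b ≤ j → x ∉ Set.Icc (knot h x₀ a) (knot h x₀ b) := by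
    intro a b hb hc
    have := knot_le h x₀ h0 hb
    rw [Set.mem_Icc] at hc
    linarith [hc.2]
  simp only [trigBSpline]
  rw [show j + 1 - 2 = j - 1 by ring, show j + 1 - 1 = j by ring,
    show j + 1 + 1 = j + 2 by ring, show j + 1 + 2 = j + 3 by ring]
  rw [if_neg (hn _ _ (by omega)), if_pos ⟨hx1.le, hx2.le⟩]
  rfl

lemma T_jp2 (h x₀ : ℝ) (h0 : 0 < h) (j : ℤ) {x : ℝ}
    (hx : x ∈ Set.Ioo (knot h x₀ j) (knot h x₀ (j + 1))) :
    trigBSpline h x₀ (j + 2) x = (1 / (Real.sin (h / 2) * Real.sin h * Real.sin (3 * h / 2))) * pieceD h x₀ j x := by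
  obtain ⟨hx1, hx2⟩ := hx
  simp only [trigBSpline]
  rw [show j + 2 - 2 = j by ring, show j + 2 - 1 = j + 1 by ring]
  rw [if_pos ⟨hx1.le, hx2.le⟩]
  rfl

lemma key_step (h x₀ : ℝ) (h0 : 0 < h) (h1 : h < 2 * Real.pi / 3)
    (N : ℕ) (δ : ℤ → ℝ)
    (hzero : ∀ x ∈ Set.Icc (knot h x₀ 0) (knot h x₀ (N : ℤ)),
      ∑ i ∈ Finset.Icc (-1 : ℤ) (N + 1), δ i * trigBSpline h x₀ i x = 0)
    (j : ℤ) (hj0 : 0 ≤ j) (hjN : j + 1 ≤ (N : ℤ)) :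
    δ (j - 1) = 0 ∧ δ j = 0 ∧ δ (j + 1) = 0 ∧ δ (j + 2) = 0 := by
  have hπ := Real.pi_pos
  have hs1 : 0 < Real.sin (h / 2) := Real.sin_pos_of_pos_of_lt_pi (by linarith) (by linarith)
  have hs2 : 0 < Real.sin h := Real.sin_pos_of_pos_of_lt_pi h0 (by linarith)
  have hs3 : 0 < Real.sin (3 * h / 2) := Real.sin_pos_of_pos_of_lt_pi (by linarith) (by linarith)
  have hcos : 0 < Real.cos (h / 2) := Real.cos_pos_of_mem_Ioo ⟨by linarith, by linarith⟩
  have hγ : (Real.sin (h / 2) * Real.sin h * Real.sin (3 * h / 2)) ≠ 0 := by positivity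
  have hΔ : (4*(Real.sin (h / 2)) ^ 4*(Real.sin h) ^ 8 + 4*(Real.sin (h / 2)) ^ 6*(Real.sin h) ^ 4*(Real.sin (3 * h / 2)) ^ 2 - 5*(Real.sin (h / 2)) ^ 6*(Real.sin h) ^ 6 + (Real.sin (h / 2)) ^ 8*(Real.sin (3 * h / 2)) ^ 4 - 2*(Real.sin (h / 2)) ^ 8*(Real.sin h) ^ 2*(Real.sin (3 * h / 2)) ^ 2 + 2*(Real.sin (h / 2)) ^ 8*(Real.sin h) ^ 3*(Real.sin (2 * h)) + (Real.sin (h / 2)) ^ 8*(Real.sin h) ^ 4 - 1*(Real.sin (h / 2)) ^ 10*(Real.sin (2 * h)) ^ 2 - 2*(Real.sin (h / 2)) ^ 10*(Real.sin (3 * h / 2)) ^ 2 - 4*(Real.sin (h / 2)) ^ 10*(Real.sin h)*(Real.sin (2 * h)) - 2*(Real.sin (h / 2)) ^ 10*(Real.sin h) ^ 2 + (Real.sin (h / 2)) ^ 12) ≠ 0 := by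
    rw [det_key h]
    exact ne_of_gt (mul_pos (mul_pos (mul_pos (by norm_num : (0:ℝ) < 144)
      (pow_pos hs1 10)) (pow_pos hcos 4)) (pow_pos hs3 2))
  have han : AnalyticOnNhd ℝ (locF h x₀ δ j) Set.univ := by
    unfold locF pieceA pieceB pieceC pieceD
    exact analyticOnNhd_const.mul
      ((((analyticOnNhd_const.mul ((an_sin_y _).pow 3)).add
        (analyticOnNhd_const.mul (((an_sin_w _).mul ((an_sin_y _).pow 2)).add
          ((an_sin_y _).mul (((an_sin_w _).mul (an_sin_y _)).add
            ((an_sin_y _).mul (an_sin_w _))))))).add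
        (analyticOnNhd_const.mul (((an_sin_w _).mul (((an_sin_w _).mul (an_sin_y _)).add
            ((an_sin_y _).mul (an_sin_w _)))).add
          ((an_sin_y _).mul ((an_sin_w _).pow 2))))).add
        (analyticOnNhd_const.mul ((an_sin_w _).pow 3)))
  have hF0 : ∀ x ∈ Set.Ioo (knot h x₀ j) (knot h x₀ (j + 1)), locF h x₀ δ j x = 0 := by
    intro x hx
    have hsum : ∑ i ∈ Finset.Icc (-1 : ℤ) (N + 1), δ i * trigBSpline h x₀ i x
        = locF h x₀ δ j x := by
      have hvan : ∀ i ∈ Finset.Icc (-1 : ℤ) ((N : ℤ) + 1), i ∉ Finset.Icc (j - 1) (j + 2) →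
          δ i * trigBSpline h x₀ i x = 0 := by
        intro i _ hi
        rw [Finset.mem_Icc] at hi
        exact mul_eq_zero_of_right _ (T_out h x₀ h0 hx (by omega))
      have hsub : Finset.Icc (j - 1) (j + 2) ⊆ Finset.Icc (-1 : ℤ) ((N : ℤ) + 1) :=
        Finset.Icc_subset_Icc (by omega) (by omega)
      rw [← Finset.sum_subset hsub hvan]
      rw [show Finset.Icc (j - 1) (j + 2) = {j - 1, j, j + 1, j + 2} from by
        ext k; simp only [Finset.mem_Icc, Finset.mem_insert, Finset.mem_singleton]; omega]
      rw [Finset.sum_insert (by simp only [Finset.mem_insert, Finset.mem_singleton]; omega),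
        Finset.sum_insert (by simp only [Finset.mem_insert, Finset.mem_singleton]; omega),
        Finset.sum_insert (by simp only [Finset.mem_singleton]; omega),
        Finset.sum_singleton]
      rw [T_jm1 h x₀ h0 j hx, T_j h x₀ h0 j hx, T_jp1 h x₀ h0 j hx, T_jp2 h x₀ h0 j hx]
      simp only [locF]; ring
    rw [← hsum]
    refine hzero x ⟨?_, ?_⟩
    · exact le_trans (knot_le h x₀ h0 (by omega)) hx.1.le
    · exact le_trans hx.2.le (knot_le h x₀ h0 (by omega))
  have hEq : Set.EqOn (locF h x₀ δ j) 0 Set.univ := by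
    have hlt : knot h x₀ j < knot h x₀ (j + 1) := knot_lt h x₀ h0 (by omega)
    apply han.eqOn_zero_of_preconnected_of_eventuallyEq_zero isPreconnected_univ
      (Set.mem_univ ((knot h x₀ j + knot h x₀ (j + 1)) / 2))
    have hmem : Set.Ioo (knot h x₀ j) (knot h x₀ (j + 1)) ∈
        nhds ((knot h x₀ j + knot h x₀ (j + 1)) / 2) :=
      Ioo_mem_nhds (by linarith) (by linarith)
    exact Filter.eventuallyEq_of_mem hmem (fun x hx => hF0 x hx)
  have Em1 := hEq (Set.mem_univ (knot h x₀ (j - 1)))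
  simp only [locF, pieceA, pieceB, pieceC, pieceD, Pi.zero_apply] at Em1
  rw [show (knot h x₀ (j - 1) - knot h x₀ (j - 2)) / 2 = h / 2 from by simp only [knot]; push_cast; ring,
    show (knot h x₀ (j - 1) - knot h x₀ (j - 1)) / 2 = 0 from by ring,
    show (knot h x₀ (j - 1) - knot h x₀ j) / 2 = -(h / 2) from by simp only [knot]; push_cast; ring,
    show (knot h x₀ (j + 1) - knot h x₀ (j - 1)) / 2 = h from by simp only [knot]; push_cast; ring,
    show (knot h x₀ (j + 2) - knot h x₀ (j - 1)) / 2 = 3 * h / 2 from by simp only [knot]; push_cast; ring,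
    show (knot h x₀ (j + 3) - knot h x₀ (j - 1)) / 2 = 2 * h from by simp only [knot]; push_cast; ring] at Em1
  simp only [Real.sin_zero, Real.sin_neg] at Em1
  rw [mul_eq_zero] at Em1
  have Pm1 := Em1.resolve_left (one_div_ne_zero hγ)
  have E0 := hEq (Set.mem_univ (knot h x₀ j))
  simp only [locF, pieceA, pieceB, pieceC, pieceD, Pi.zero_apply] at E0
  rw [show (knot h x₀ j - knot h x₀ (j - 2)) / 2 = h from by simp only [knot]; push_cast; ring,
    show (knot h x₀ j - knot h x₀ (j - 1)) / 2 = h / 2 from by simp only [knot]; push_cast; ring,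
    show (knot h x₀ j - knot h x₀ j) / 2 = 0 from by ring,
    show (knot h x₀ (j + 1) - knot h x₀ j) / 2 = h / 2 from by simp only [knot]; push_cast; ring,
    show (knot h x₀ (j + 2) - knot h x₀ j) / 2 = h from by simp only [knot]; push_cast; ring,
    show (knot h x₀ (j + 3) - knot h x₀ j) / 2 = 3 * h / 2 from by simp only [knot]; push_cast; ring] at E0
  simp only [Real.sin_zero, Real.sin_neg] at E0
  rw [mul_eq_zero] at E0
  have P0 := E0.resolve_left (one_div_ne_zero hγ)
  have E1 := hEq (Set.mem_univ (knot h x₀ (j + 1)))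
  simp only [locF, pieceA, pieceB, pieceC, pieceD, Pi.zero_apply] at E1
  rw [show (knot h x₀ (j + 1) - knot h x₀ (j - 2)) / 2 = 3 * h / 2 from by simp only [knot]; push_cast; ring,
    show (knot h x₀ (j + 1) - knot h x₀ (j - 1)) / 2 = h from by simp only [knot]; push_cast; ring,
    show (knot h x₀ (j + 1) - knot h x₀ j) / 2 = h / 2 from by simp only [knot]; push_cast; ring,
    show (knot h x₀ (j + 1) - knot h x₀ (j + 1)) / 2 = 0 from by ring,
    show (knot h x₀ (j + 2) - knot h x₀ (j + 1)) / 2 = h / 2 from by simp only [knot]; push_cast; ring,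
    show (knot h x₀ (j + 3) - knot h x₀ (j + 1)) / 2 = h from by simp only [knot]; push_cast; ring] at E1
  simp only [Real.sin_zero, Real.sin_neg] at E1
  rw [mul_eq_zero] at E1
  have P1 := E1.resolve_left (one_div_ne_zero hγ)
  have E2 := hEq (Set.mem_univ (knot h x₀ (j + 2)))
  simp only [locF, pieceA, pieceB, pieceC, pieceD, Pi.zero_apply] at E2
  rw [show (knot h x₀ (j + 2) - knot h x₀ (j - 2)) / 2 = 2 * h from by simp only [knot]; push_cast; ring,
    show (knot h x₀ (j + 2) - knot h x₀ (j - 1)) / 2 = 3 * h / 2 from by simp only [knot]; push_cast; ring,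
    show (knot h x₀ (j + 2) - knot h x₀ j) / 2 = h from by simp only [knot]; push_cast; ring,
    show (knot h x₀ (j + 1) - knot h x₀ (j + 2)) / 2 = -(h / 2) from by simp only [knot]; push_cast; ring,
    show (knot h x₀ (j + 2) - knot h x₀ (j + 2)) / 2 = 0 from by ring,
    show (knot h x₀ (j + 3) - knot h x₀ (j + 2)) / 2 = h / 2 from by simp only [knot]; push_cast; ring] at E2
  simp only [Real.sin_zero, Real.sin_neg] at E2
  rw [mul_eq_zero] at E2
  have P2 := E2.resolve_left (one_div_ne_zero hγ)
  have hD0 : δ (j - 1) * (4*(Real.sin (h / 2)) ^ 4*(Real.sin h) ^ 8 + 4*(Real.sin (h / 2)) ^ 6*(Real.sin h) ^ 4*(Real.sin (3 * h / 2)) ^ 2 - 5*(Real.sin (h / 2)) ^ 6*(Real.sin h) ^ 6 + (Real.sin (h / 2)) ^ 8*(Real.sin (3 * h / 2)) ^ 4 - 2*(Real.sin (h / 2)) ^ 8*(Real.sin h) ^ 2*(Real.sin (3 * h / 2)) ^ 2 + 2*(Real.sin (h / 2)) ^ 8*(Real.sin h) ^ 3*(Real.sin (2 * h)) + (Real.sin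 (h / 2)) ^ 8*(Real.sin h) ^ 4 - 1*(Real.sin (h / 2)) ^ 10*(Real.sin (2 * h)) ^ 2 - 2*(Real.sin (h / 2)) ^ 10*(Real.sin (3 * h / 2)) ^ 2 - 4*(Real.sin (h / 2)) ^ 10*(Real.sin h)*(Real.sin (2 * h)) - 2*(Real.sin (h / 2)) ^ 10*(Real.sin h) ^ 2 + (Real.sin (h / 2)) ^ 12) = 0 := by
    linear_combination (4*(Real.sin (h / 2)) ^ 4*(Real.sin h) ^ 5 + 2*(Real.sin (h / 2)) ^ 6*(Real.sin h)*(Real.sin (3 * h / 2)) ^ 2 - 3*(Real.sin (h / 2)) ^ 6*(Real.sin h) ^ 3 + (Real.sin (h / 2)) ^ 8*(Real.sin (2 * h))) * Pm1 + (2*(Real.sin (h / 2)) ^ 3*(Real.sin h) ^ 4*(Real.sin (3 * h / 2)) ^ 2 - 2*(Real.sin (h / 2)) ^ 3*(Real.sin h) ^ 6 + (Real.sin (h / 2)) ^ 5*(Real.sin (3 * h / 2)) ^ 4 - 2*(Real.sin (h / 2)) ^ 5*(Real.sin h) ^ 2*(Real.sin (3 * h / 2)) ^ 2 + (Real.sin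 (h / 2)) ^ 5*(Real.sin h) ^ 3*(Real.sin (2 * h)) + (Real.sin (h / 2)) ^ 5*(Real.sin h) ^ 4 - 1*(Real.sin (h / 2)) ^ 7*(Real.sin (2 * h)) ^ 2 - 1*(Real.sin (h / 2)) ^ 7*(Real.sin (3 * h / 2)) ^ 2 - 2*(Real.sin (h / 2)) ^ 7*(Real.sin h)*(Real.sin (2 * h)) + (Real.sin (h / 2)) ^ 7*(Real.sin h) ^ 2) * P0 + (-1*(Real.sin (h / 2)) ^ 4*(Real.sin h) ^ 3*(Real.sin (3 * h / 2)) ^ 2 - 2*(Real.sin (h / 2)) ^ 4*(Real.sin h) ^ 4*(Real.sin (2 * h)) + (Real.sin (h / 2)) ^ 4*(Real.sin h) ^ 5 + 2*(Real.sin (h / 2)) ^ 6*(Real.sin h)*(Real.sin (3 * h / 2)) ^ 2 - 2*(Real.sin (h / 2)) ^ 6*(Real.sin h) ^ 3 + (Real.sin (h / 2)) ^ 8*(Real.sin (2 * h))) * P1 + ((Real.sin (h / 2)) ^ 7*(Real.sin (3 * h / 2)) ^ 2 + 2*(Real.sin (h / 2)) ^ 7*(Real.sin h)*(Real.sin (2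 * h)) + 3*(Real.sin (h / 2)) ^ 7*(Real.sin h) ^ 2 - 1*(Real.sin (h / 2)) ^ 9) * P2
  have d0 : δ (j - 1) = 0 := (mul_eq_zero.mp hD0).resolve_right hΔ
  have hD1 : δ j * (4*(Real.sin (h / 2)) ^ 4*(Real.sin h) ^ 8 + 4*(Real.sin (h / 2)) ^ 6*(Real.sin h) ^ 4*(Real.sin (3 * h / 2)) ^ 2 - 5*(Real.sin (h / 2)) ^ 6*(Real.sin h) ^ 6 + (Real.sin (h / 2)) ^ 8*(Real.sin (3 * h / 2)) ^ 4 - 2*(Real.sin (h / 2)) ^ 8*(Real.sin h) ^ 2*(Real.sin (3 * h / 2)) ^ 2 + 2*(Real.sin (h / 2)) ^ 8*(Real.sin h) ^ 3*(Real.sin (2 * h)) + (Real.sin (h / 2)) ^ 8*(Real.sin h) ^ 4 - 1*(Real.sin (h / 2)) ^ 10*(Real.sin (2 * h)) ^ 2 - 2*(Real.sin (h / 2)) ^ 10*(Real.sin (3 * h / 2)) ^ 2 - 4*(Real.sin (h / 2)) ^ 10*(Real.sin h)*(Real.sin (2 * h)) - 2*(Real.sin (h / 2)) ^ 10*(Real.sin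 h) ^ 2 + (Real.sin (h / 2)) ^ 12) = 0 := by
    linear_combination (-2*(Real.sin (h / 2)) ^ 5*(Real.sin h) ^ 4 - 1*(Real.sin (h / 2)) ^ 7*(Real.sin (3 * h / 2)) ^ 2 + (Real.sin (h / 2)) ^ 7*(Real.sin h) ^ 2 + (Real.sin (h / 2)) ^ 9) * Pm1 + (2*(Real.sin (h / 2)) ^ 2*(Real.sin h) ^ 7 + (Real.sin (h / 2)) ^ 4*(Real.sin h) ^ 3*(Real.sin (3 * h / 2)) ^ 2 - 1*(Real.sin (h / 2)) ^ 4*(Real.sin h) ^ 5 - 1*(Real.sin (h / 2)) ^ 8*(Real.sin (2 * h)) - 2*(Real.sin (h / 2)) ^ 8*(Real.sin h)) * P0 + (-1*(Real.sin (h / 2)) ^ 3*(Real.sin h) ^ 6 + (Real.sin (h / 2)) ^ 5*(Real.sin h) ^ 3*(Real.sin (2 * h)) - 1*(Real.sin (h / 2)) ^ 7*(Real.sin (3 * h / 2)) ^ 2 + (Real.sin (h / 2)) ^ 7*(Real.sin h) ^ 2 + (Real.sin (h / 2)) ^ 9) * P1 + ((Real.sin (h / 2)) ^ 6*(Real.sin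 h) ^ 3 - 1*(Real.sin (h / 2)) ^ 8*(Real.sin (2 * h)) - 2*(Real.sin (h / 2)) ^ 8*(Real.sin h)) * P2
  have d1 : δ j = 0 := (mul_eq_zero.mp hD1).resolve_right hΔ
  have hD2 : δ (j + 1) * (4*(Real.sin (h / 2)) ^ 4*(Real.sin h) ^ 8 + 4*(Real.sin (h / 2)) ^ 6*(Real.sin h) ^ 4*(Real.sin (3 * h / 2)) ^ 2 - 5*(Real.sin (h / 2)) ^ 6*(Real.sin h) ^ 6 + (Real.sin (h / 2)) ^ 8*(Real.sin (3 * h / 2)) ^ 4 - 2*(Real.sin (h / 2)) ^ 8*(Real.sin h) ^ 2*(Real.sin (3 * h / 2)) ^ 2 + 2*(Real.sin (h / 2)) ^ 8*(Real.sin h) ^ 3*(Real.sin (2 * h)) + (Real.sin (h / 2)) ^ 8*(Real.sin h) ^ 4 - 1*(Real.sin (h / 2)) ^ 10*(Real.sin (2 * h)) ^ 2 - 2*(Real.sin (h / 2)) ^ 10*(Real.sin (3 * h / 2)) ^ 2 - 4*(Real.sin (h / 2)) ^ 10*(Real.sin h)*(Real.sin (2 * h)) - 2*(Real.sin (h / 2))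 ^ 10*(Real.sin h) ^ 2 + (Real.sin (h / 2)) ^ 12) = 0 := by
    linear_combination ((Real.sin (h / 2)) ^ 6*(Real.sin h) ^ 3 - 1*(Real.sin (h / 2)) ^ 8*(Real.sin (2 * h)) - 2*(Real.sin (h / 2)) ^ 8*(Real.sin h)) * Pm1 + (-1*(Real.sin (h / 2)) ^ 3*(Real.sin h) ^ 6 + (Real.sin (h / 2)) ^ 5*(Real.sin h) ^ 3*(Real.sin (2 * h)) - 1*(Real.sin (h / 2)) ^ 7*(Real.sin (3 * h / 2)) ^ 2 + (Real.sin (h / 2)) ^ 7*(Real.sin h) ^ 2 + (Real.sin (h / 2)) ^ 9) * P0 + (2*(Real.sin (h / 2)) ^ 2*(Real.sin h) ^ 7 + (Real.sin (h / 2)) ^ 4*(Real.sin h) ^ 3*(Real.sin (3 * h / 2)) ^ 2 - 1*(Real.sin (h / 2)) ^ 4*(Real.sin h) ^ 5 - 1*(Real.sin (h / 2)) ^ 8*(Real.sin (2 * h)) - 2*(Real.sin (h / 2)) ^ 8*(Real.sin h)) * P1 + (-2*(Real.sin (h / 2)) ^ 5*(Real.sin h) ^ 4 - 1*(Real.sin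 (h / 2)) ^ 7*(Real.sin (3 * h / 2)) ^ 2 + (Real.sin (h / 2)) ^ 7*(Real.sin h) ^ 2 + (Real.sin (h / 2)) ^ 9) * P2
  have d2 : δ (j + 1) = 0 := (mul_eq_zero.mp hD2).resolve_right hΔ
  have hD3 : δ (j + 2) * (4*(Real.sin (h / 2)) ^ 4*(Real.sin h) ^ 8 + 4*(Real.sin (h / 2)) ^ 6*(Real.sin h) ^ 4*(Real.sin (3 * h / 2)) ^ 2 - 5*(Real.sin (h / 2)) ^ 6*(Real.sin h) ^ 6 + (Real.sin (h / 2)) ^ 8*(Real.sin (3 * h / 2)) ^ 4 - 2*(Real.sin (h / 2)) ^ 8*(Real.sin h) ^ 2*(Real.sin (3 * h / 2)) ^ 2 + 2*(Real.sin (h / 2)) ^ 8*(Real.sin h) ^ 3*(Real.sin (2 * h)) + (Real.sin (h / 2)) ^ 8*(Real.sin h) ^ 4 - 1*(Real.sin (h / 2)) ^ 10*(Real.sin (2 * h)) ^ 2 - 2*(Real.sin (h / 2)) ^ 10*(Real.sin (3 * h / 2)) ^ 2 - 4*(Real.sin (h / 2)) ^ 10*(Real.sin h)*(Real.sin (2 *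 h)) - 2*(Real.sin (h / 2)) ^ 10*(Real.sin h) ^ 2 + (Real.sin (h / 2)) ^ 12) = 0 := by
    linear_combination ((Real.sin (h / 2)) ^ 7*(Real.sin (3 * h / 2)) ^ 2 + 2*(Real.sin (h / 2)) ^ 7*(Real.sin h)*(Real.sin (2 * h)) + 3*(Real.sin (h / 2)) ^ 7*(Real.sin h) ^ 2 - 1*(Real.sin (h / 2)) ^ 9) * Pm1 + (-1*(Real.sin (h / 2)) ^ 4*(Real.sin h) ^ 3*(Real.sin (3 * h / 2)) ^ 2 - 2*(Real.sin (h / 2)) ^ 4*(Real.sin h) ^ 4*(Real.sin (2 * h)) + (Real.sin (h / 2)) ^ 4*(Real.sin h) ^ 5 + 2*(Real.sin (h / 2)) ^ 6*(Real.sin h)*(Real.sin (3 * h / 2)) ^ 2 - 2*(Real.sin (h / 2)) ^ 6*(Real.sin h) ^ 3 + (Real.sin (h / 2)) ^ 8*(Real.sin (2 * h))) * P0 + (2*(Real.sin (h / 2)) ^ 3*(Real.sin h) ^ 4*(Real.sin (3 * h / 2)) ^ 2 - 2*(Real.sin (h / 2)) ^ 3*(Real.sin h) ^ 6 + (Real.sin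 (h / 2)) ^ 5*(Real.sin (3 * h / 2)) ^ 4 - 2*(Real.sin (h / 2)) ^ 5*(Real.sin h) ^ 2*(Real.sin (3 * h / 2)) ^ 2 + (Real.sin (h / 2)) ^ 5*(Real.sin h) ^ 3*(Real.sin (2 * h)) + (Real.sin (h / 2)) ^ 5*(Real.sin h) ^ 4 - 1*(Real.sin (h / 2)) ^ 7*(Real.sin (2 * h)) ^ 2 - 1*(Real.sin (h / 2)) ^ 7*(Real.sin (3 * h / 2)) ^ 2 - 2*(Real.sin (h / 2)) ^ 7*(Real.sin h)*(Real.sin (2 * h)) + (Real.sin (h / 2)) ^ 7*(Real.sin h) ^ 2) * P1 + (4*(Real.sin (h / 2)) ^ 4*(Real.sin h) ^ 5 + 2*(Real.sin (h / 2)) ^ 6*(Real.sin h)*(Real.sin (3 * h / 2)) ^ 2 - 3*(Real.sin (h / 2)) ^ 6*(Real.sin h) ^ 3 + (Real.sin (h / 2)) ^ 8*(Real.sin (2 * h))) * P2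
  have d3 : δ (j + 2) = 0 := (mul_eq_zero.mp hD3).resolve_right hΔ
  exact ⟨d0, d1, d2, d3⟩

/-- For `0 < h < 2π/3` and `N ≥ 1`, the restrictions of the trigonometric
cubic B-splines `T_{-1}, T_0, …, T_{N+1}` to `[x_0, x_N]` are linearly independent: if
`Σ_{i=-1}^{N+1} δᵢ·T_i(x) = 0` for all `x ∈ [x_0, x_N]`, then all `δᵢ = 0`. -/
theorem trigBSpline_linearIndependent (h x₀ : ℝ) (h0 : 0 < h) (h1 : h < 2 * Real.pi / 3)
    (N : ℕ) (hN : 1 ≤ N) (δ : ℤ → ℝ)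
    (hzero : ∀ x ∈ Set.Icc (knot h x₀ 0) (knot h x₀ (N : ℤ)),
      ∑ i ∈ Finset.Icc (-1 : ℤ) (N + 1), δ i * trigBSpline h x₀ i x = 0) :
    ∀ i : ℤ, -1 ≤ i → i ≤ (N : ℤ) + 1 → δ i = 0 := by
  intro i hi1 hi2
  have hex : ∃ j : ℤ, 0 ≤ j ∧ j + 1 ≤ (N : ℤ) ∧
      (i = j - 1 ∨ i = j ∨ i = j + 1 ∨ i = j + 2) := by
    rcases le_or_gt i 1 with hc | hc
    · exact ⟨0, by omega, by omega, by omega⟩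
    rcases le_or_gt i (N : ℤ) with hc2 | hc2
    · exact ⟨i - 1, by omega, by omega, by omega⟩
    · exact ⟨(N : ℤ) - 1, by omega, by omega, by omega⟩
  obtain ⟨j, hj0, hjN, hcase⟩ := hex
  obtain ⟨k1, k2, k3, k4⟩ := key_step h x₀ h0 h1 N δ hzero j hj0 hjN
  rcases hcase with hc | hc | hc | hc
  · rw [hc]; exact k1
  · rw [hc]; exact k2
  · rw [hc]; exact k3
  · rw [hc]; exact k4
end

section
/- Let b, x₀ ∈ ℝ, let k = (1/2)·√(11/19) and d = √(11/19), and define u : ℝ × ℝ → ℝ by u(x, t) = b + (15/19)·d·(−9·tanh(k·(x − b·t − x₀)) + 11·tanh³(k·(x − b·t − x₀))). Then u is a classical solution of the Kuramoto–Sivashinsky equation with α = 1 and θ = 1: for all (x, t) ∈ ℝ × ℝ, ∂u/∂t + u·∂u/∂x + ∂²u/∂x² + ∂⁴u/∂x⁴ = 0. -/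
open Real

lemma tanh_hda (y : ℝ) : HasDerivAt Real.tanh (1 - Real.tanh y ^ 2) y := by
  have hc : Real.cosh y ≠ 0 := (Real.cosh_pos y).ne'
  have h := (Real.hasDerivAt_sinh y).div (Real.hasDerivAt_cosh y) hc
  have hf : Real.tanh = fun x => Real.sinh x / Real.cosh x :=
    funext fun x => Real.tanh_eq_sinh_div_cosh x
  rw [hf]
  convert h using 1; rfl; rfl; rfl
  have h2 := Real.cosh_sq_sub_sinh_sq y
  field_simp

lemma hda_poly (a0 a1 a2 a3 a4 a5 a6 : ℝ) (y : ℝ) :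
    HasDerivAt (fun z : ℝ => a0 + a1*z + a2*z^2 + a3*z^3 + a4*z^4 + a5*z^5 + a6*z^6)
      (a1 + 2*a2*y + 3*a3*y^2 + 4*a4*y^3 + 5*a5*y^4 + 6*a6*y^5) y := by
  have h := ((((((hasDerivAt_const y a0).add ((hasDerivAt_pow 1 y).const_mul a1)).add
    ((hasDerivAt_pow 2 y).const_mul a2)).add ((hasDerivAt_pow 3 y).const_mul a3)).add
    ((hasDerivAt_pow 4 y).const_mul a4)).add ((hasDerivAt_pow 5 y).const_mul a5)).add
    ((hasDerivAt_pow 6 y).const_mul a6)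
  convert h using 1
  · rfl
  · rfl
  · funext z; simp only [Pi.add_apply]; ring
  · norm_num; ring

lemma key (p q : ℝ → ℝ) (hpq : ∀ y, HasDerivAt p (q y) y) (g : ℝ → ℝ) (m x : ℝ)
    (hg : HasDerivAt g m x) :
    HasDerivAt (fun ξ => p (Real.tanh (g ξ)))
      (q (Real.tanh (g x)) * ((1 - Real.tanh (g x) ^ 2) * m)) x := by
  exact (hpq _).comp x ((tanh_hda (g x)).comp x hg)

set_option maxHeartbeats 1000000 in
/-- With `k = (1/2)·√(11/19)`, `d = √(11/19)`, the function
`u(x,t) = b + (15/19)·d·(−9·tanh(k(x − bt − x₀)) + 11·tanh³(k(x − bt − x₀)))`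
is a classical solution of the Kuramoto–Sivashinsky equation with `α = θ = 1`:
`u_t + u·u_x + u_xx + u_xxxx = 0` everywhere. -/
theorem KS_exact_solution (b x₀ : ℝ)
    (k d : ℝ) (hk : k = (1 / 2) * Real.sqrt (11 / 19)) (hd : d = Real.sqrt (11 / 19))
    (u : ℝ → ℝ → ℝ)
    (hu : u = fun x t => b + (15 / 19) * d *
      (-9 * Real.tanh (k * (x - b * t - x₀)) + 11 * Real.tanh (k * (x - b * t - x₀)) ^ 3)) :
    ∀ x t : ℝ,
      deriv (fun τ => u x τ) t + u x t * deriv (fun ξ => u ξ t) x +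
        iteratedDeriv 2 (fun ξ => u ξ t) x + iteratedDeriv 4 (fun ξ => u ξ t) x = 0 := by
  subst hu
  intro x t
  have hd2 : d ^ 2 = 11 / 19 := by
    rw [hd]; exact Real.sq_sqrt (by norm_num)
  have hk2 : k = d / 2 := by rw [hk, hd]; ring
  have hg : ∀ x' : ℝ, HasDerivAt (fun ξ : ℝ => k * (ξ - b * t - x₀)) k x' := by
    intro x'
    have h := (((hasDerivAt_id x').sub_const (b * t)).sub_const x₀).const_mul k
    convert h using 1; rfl; rfl; rfl; ring
  have hgt : HasDerivAt (fun τ : ℝ => k * (x - b * τ - x₀)) (-(k * b)) t := by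
    have h := (((hasDerivAt_const t x).sub ((hasDerivAt_id t).const_mul b)).sub_const x₀).const_mul k
    convert h using 1; rfl; rfl; rfl; ring
  have e0 : (fun ξ => b + 15 / 19 * d *
      (-9 * Real.tanh (k * (ξ - b * t - x₀)) + 11 * Real.tanh (k * (ξ - b * t - x₀)) ^ 3)) = (fun ξ => (b) + (-9*(15/19*d))*Real.tanh (k * (ξ - b * t - x₀)) + (0)*Real.tanh (k * (ξ - b * t - x₀))^2 + (11*(15/19*d))*Real.tanh (k * (ξ - b * t - x₀))^3 + (0)*Real.tanh (k * (ξ - b * t - x₀))^4 + (0)*Real.tanh (k * (ξ - b * t - x₀))^5 + (0)*Real.tanh (k * (ξ - b * t - x₀))^6) := by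
    funext ξ; ring
  have e0t : (fun τ => b + 15 / 19 * d *
      (-9 * Real.tanh (k * (x - b * τ - x₀)) + 11 * Real.tanh (k * (x - b * τ - x₀)) ^ 3)) = (fun τ => (b) + (-9*(15/19*d))*Real.tanh (k * (x - b * τ - x₀)) + (0)*Real.tanh (k * (x - b * τ - x₀))^2 + (11*(15/19*d))*Real.tanh (k * (x - b * τ - x₀))^3 + (0)*Real.tanh (k * (x - b * τ - x₀))^4 + (0)*Real.tanh (k * (x - b * τ - x₀))^5 + (0)*Real.tanh (k * (x - b * τ - x₀))^6) := by
    funext τ; ring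
  have hdt : HasDerivAt (fun τ => b + 15 / 19 * d *
      (-9 * Real.tanh (k * (x - b * τ - x₀)) + 11 * Real.tanh (k * (x - b * τ - x₀)) ^ 3))
      (((-9*(15/19*d)) + 2*(0)*Real.tanh (k * (x - b * t - x₀)) + 3*(11*(15/19*d))*Real.tanh (k * (x - b * t - x₀))^2 + 4*(0)*Real.tanh (k * (x - b * t - x₀))^3 + 5*(0)*Real.tanh (k * (x - b * t - x₀))^4 + 6*(0)*Real.tanh (k * (x - b * t - x₀))^5) * ((1 - Real.tanh (k * (x - b * t - x₀)) ^ 2) * (-(k * b)))) t := by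
    rw [e0t]
    exact key _ _ (hda_poly (b) (-9*(15/19*d)) (0) (11*(15/19*d)) (0) (0) (0)) _ _ _ hgt
  have hd1 : ∀ x' : ℝ, HasDerivAt (fun ξ => b + 15 / 19 * d *
      (-9 * Real.tanh (k * (ξ - b * t - x₀)) + 11 * Real.tanh (k * (ξ - b * t - x₀)) ^ 3))
      (((-9*(15/19*d)) + 2*(0)*Real.tanh (k * (x' - b * t - x₀)) + 3*(11*(15/19*d))*Real.tanh (k * (x' - b * t - x₀))^2 + 4*(0)*Real.tanh (k * (x' - b * t - x₀))^3 + 5*(0)*Real.tanh (k * (x' - b * t - x₀))^4 + 6*(0)*Real.tanh (k * (x' - b * t - x₀))^5) * ((1 - Real.tanh (k * (x' - b * t - x₀)) ^ 2) * k)) x' := by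
    intro x'
    rw [e0]
    exact key _ _ (hda_poly (b) (-9*(15/19*d)) (0) (11*(15/19*d)) (0) (0) (0)) _ _ _ (hg x')
  have E1 : deriv (fun ξ => b + 15 / 19 * d *
      (-9 * Real.tanh (k * (ξ - b * t - x₀)) + 11 * Real.tanh (k * (ξ - b * t - x₀)) ^ 3)) = (fun x' => (-9*k*(15/19*d)) + (0)*Real.tanh (k * (x' - b * t - x₀)) + (42*k*(15/19*d))*Real.tanh (k * (x' - b * t - x₀))^2 + (0)*Real.tanh (k * (x' - b * t - x₀))^3 + (-33*k*(15/19*d))*Real.tanh (k * (x' - b * t - x₀))^4 + (0)*Real.tanh (k * (x' - b * t - x₀))^5 + (0)*Real.tanh (k * (x' - b * t - x₀))^6) := by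
    funext x'
    rw [(hd1 x').deriv]
    ring
  have hd2' : ∀ x' : ℝ, HasDerivAt (fun x' => (-9*k*(15/19*d)) + (0)*Real.tanh (k * (x' - b * t - x₀)) + (42*k*(15/19*d))*Real.tanh (k * (x' - b * t - x₀))^2 + (0)*Real.tanh (k * (x' - b * t - x₀))^3 + (-33*k*(15/19*d))*Real.tanh (k * (x' - b * t - x₀))^4 + (0)*Real.tanh (k * (x' - b * t - x₀))^5 + (0)*Real.tanh (k * (x' - b * t - x₀))^6)
      (((0) + 2*(42*k*(15/19*d))*Real.tanh (k * (x' - b * t - x₀)) + 3*(0)*Real.tanh (k * (x' - b * t - x₀))^2 + 4*(-33*k*(15/19*d))*Real.tanh (k * (x' - b * t - x₀))^3 + 5*(0)*Real.tanh (k * (x' - b * t - x₀))^4 + 6*(0)*Real.tanh (k * (x' - b * t - x₀))^5) * ((1 - Real.tanh (k * (x' - b * t - x₀)) ^ 2) * k)) x' := by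
    intro x'
    exact key _ _ (hda_poly (-9*k*(15/19*d)) (0) (42*k*(15/19*d)) (0) (-33*k*(15/19*d)) (0) (0)) _ _ _ (hg x')
  have E2 : deriv (fun x' => (-9*k*(15/19*d)) + (0)*Real.tanh (k * (x' - b * t - x₀)) + (42*k*(15/19*d))*Real.tanh (k * (x' - b * t - x₀))^2 + (0)*Real.tanh (k * (x' - b * t - x₀))^3 + (-33*k*(15/19*d))*Real.tanh (k * (x' - b * t - x₀))^4 + (0)*Real.tanh (k * (x' - b * t - x₀))^5 + (0)*Real.tanh (k * (x' - b * t - x₀))^6) = (fun x' => (0) + (84*k^2*(15/19*d))*Real.tanh (k * (x' - b * t - x₀)) + (0)*Real.tanh (k * (x' - b * t - x₀))^2 + (-216*k^2*(15/19*d))*Real.tanh (k * (x' - b * t - x₀))^3 + (0)*Real.tanh (k * (x' - b * t - x₀))^4 + (132*k^2*(15/19*d))*Real.tanh (k * (x' - b * t - x₀))^5 + (0)*Real.tanh (k * (x' - b * t - x₀))^6) := by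
    funext x'
    rw [(hd2' x').deriv]
    ring
  have hd3' : ∀ x' : ℝ, HasDerivAt (fun x' => (0) + (84*k^2*(15/19*d))*Real.tanh (k * (x' - b * t - x₀)) + (0)*Real.tanh (k * (x' - b * t - x₀))^2 + (-216*k^2*(15/19*d))*Real.tanh (k * (x' - b * t - x₀))^3 + (0)*Real.tanh (k * (x' - b * t - x₀))^4 + (132*k^2*(15/19*d))*Real.tanh (k * (x' - b * t - x₀))^5 + (0)*Real.tanh (k * (x' - b * t - x₀))^6)
      (((84*k^2*(15/19*d)) + 2*(0)*Real.tanh (k * (x' - b * t - x₀)) + 3*(-216*k^2*(15/19*d))*Real.tanh (k * (x' - b * t - x₀))^2 + 4*(0)*Real.tanh (k * (x' - b * t - x₀))^3 + 5*(132*k^2*(15/19*d))*Real.tanh (k * (x' - b * t - x₀))^4 + 6*(0)*Real.tanh (k * (x' - b * t - x₀))^5) * ((1 - Real.tanh (k * (x' - b * t - x₀)) ^ 2) * k)) x' := by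
    intro x'
    exact key _ _ (hda_poly (0) (84*k^2*(15/19*d)) (0) (-216*k^2*(15/19*d)) (0) (132*k^2*(15/19*d)) (0)) _ _ _ (hg x')
  have E3 : deriv (fun x' => (0) + (84*k^2*(15/19*d))*Real.tanh (k * (x' - b * t - x₀)) + (0)*Real.tanh (k * (x' - b * t - x₀))^2 + (-216*k^2*(15/19*d))*Real.tanh (k * (x' - b * t - x₀))^3 + (0)*Real.tanh (k * (x' - b * t - x₀))^4 + (132*k^2*(15/19*d))*Real.tanh (k * (x' - b * t - x₀))^5 + (0)*Real.tanh (k * (x' - b * t - x₀))^6) = (fun x' => (84*k^3*(15/19*d)) + (0)*Real.tanh (k * (x' - b * t - x₀)) + (-732*k^3*(15/19*d))*Real.tanh (k * (x' - b * t - x₀))^2 + (0)*Real.tanh (k * (x' - b * t - x₀))^3 + (1308*k^3*(15/19*d))*Real.tanh (k * (x' - b * t - x₀))^4 + (0)*Real.tanh (k * (x' - b * t - x₀))^5 + (-660*k^3*(15/19*d))*Real.tanh (k * (x' - b * t - x₀))^6) := by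
    funext x'
    rw [(hd3' x').deriv]
    ring
  have hd4' : ∀ x' : ℝ, HasDerivAt (fun x' => (84*k^3*(15/19*d)) + (0)*Real.tanh (k * (x' - b * t - x₀)) + (-732*k^3*(15/19*d))*Real.tanh (k * (x' - b * t - x₀))^2 + (0)*Real.tanh (k * (x' - b * t - x₀))^3 + (1308*k^3*(15/19*d))*Real.tanh (k * (x' - b * t - x₀))^4 + (0)*Real.tanh (k * (x' - b * t - x₀))^5 + (-660*k^3*(15/19*d))*Real.tanh (k * (x' - b * t - x₀))^6)
      (((0) + 2*(-732*k^3*(15/19*d))*Real.tanh (k * (x' - b * t - x₀)) + 3*(0)*Real.tanh (k * (x' - b * t - x₀))^2 + 4*(1308*k^3*(15/19*d))*Real.tanh (k * (x' - b * t - x₀))^3 + 5*(0)*Real.tanh (k * (x' - b * t - x₀))^4 + 6*(-660*k^3*(15/19*d))*Real.tanh (k * (x' - b * t - x₀))^5) * ((1 - Real.tanh (k * (x' - b * t - x₀)) ^ 2) * k)) x' := by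
    intro x'
    exact key _ _ (hda_poly (84*k^3*(15/19*d)) (0) (-732*k^3*(15/19*d)) (0) (1308*k^3*(15/19*d)) (0) (-660*k^3*(15/19*d))) _ _ _ (hg x')
  have h2eq : iteratedDeriv 2 (fun ξ => b + 15 / 19 * d *
      (-9 * Real.tanh (k * (ξ - b * t - x₀)) + 11 * Real.tanh (k * (ξ - b * t - x₀)) ^ 3)) = deriv (deriv (fun ξ => b + 15 / 19 * d *
      (-9 * Real.tanh (k * (ξ - b * t - x₀)) + 11 * Real.tanh (k * (ξ - b * t - x₀)) ^ 3))) := by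
    simp [iteratedDeriv_succ, iteratedDeriv_zero]
  have h4eq : iteratedDeriv 4 (fun ξ => b + 15 / 19 * d *
      (-9 * Real.tanh (k * (ξ - b * t - x₀)) + 11 * Real.tanh (k * (ξ - b * t - x₀)) ^ 3)) = deriv (deriv (deriv (deriv (fun ξ => b + 15 / 19 * d *
      (-9 * Real.tanh (k * (ξ - b * t - x₀)) + 11 * Real.tanh (k * (ξ - b * t - x₀)) ^ 3))))) := by
    simp [iteratedDeriv_succ, iteratedDeriv_zero]
  simp only [h2eq, h4eq, E1, E2, E3, hdt.deriv, (hd4' x).deriv]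
  rw [hk2]
  set T := Real.tanh (d / 2 * (x - b * t - x₀)) with hT
  linear_combination (d^3 * (15/304) * (1 - T^2) * (-1464*T + 5232*T^3 - 3960*T^5)) * hd2
end
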